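/- arXiv:1701.08418 — 5 statements merged into one kernel-verified Lean document; each statement's English description precedes it below -/
import Mathlib

section
/- For every oriented linear chord diagram C of d chords, if the bracket polynomial ⟨C⟩ is nonzero then its span is at most 4d. -/
open Equiv LaurentPolynomial Finset

/-- `C` is an oriented linear chord diagram of `d` chords: a set of `d` ordered pairs of
integers whose entries (first and second components together) are exactly `{1, …, 2d}`.
(Together with `C.card = d` this forces all `2d` entries to be pairwise distinct.) -/
def IsOLCD (d : ℕ) (C : Finset (ℤ × ℤ)) : Prop :=
  C.card = d ∧ (C.image Prod.fst ∪ C.image Prod.snd) = Finset.Icc 1 (2 * (d : ℤ))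

/-- The set `R_c` of transpositions of `ℤ` associated to a chord `c = (i, j)` carrying the
label `lbl` (`true` = `A`, `false` = `B`). -/
def Rset (lbl : Bool) (c : ℤ × ℤ) : Set (Equiv.Perm ℤ) :=
  if lbl = decide (c.1 < c.2) then
    {Equiv.swap c.1 (c.2 - 1), Equiv.swap (c.1 - 1) c.2}
  else
    {Equiv.swap c.1 c.2, Equiv.swap (c.1 - 1) (c.2 - 1)}

/-- The subgroup of permutations generated by `⋃_{c ∈ C} R_c`, for a state `s` of `C`. -/
def stateGroup (C : Finset (ℤ × ℤ)) (s : {c // c ∈ C} → Bool) : Subgroup (Equiv.Perm ℤ) :=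
  Subgroup.closure (⋃ c : {c // c ∈ C}, Rset (s c) c.1)

/-- `Γ_s`: the number of orbits of the action of `stateGroup C s` on `{0, 1, …, 2d}`,
counted as the number of distinct orbits of elements of `{0, …, 2d}`. -/
noncomputable def Gamma (d : ℕ) (C : Finset (ℤ × ℤ)) (s : {c // c ∈ C} → Bool) : ℕ :=
  ((fun x : ℤ => MulAction.orbit (stateGroup C s) x) '' Set.Icc (0 : ℤ) (2 * d)).ncard

/-- `⟨C|s⟩ = A^(|s⁻¹(A)| - |s⁻¹(B)|) * (-A² - A⁻²)^(Γ_s - 1)`. -/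
noncomputable def bracketTerm (d : ℕ) (C : Finset (ℤ × ℤ)) (s : {c // c ∈ C} → Bool) :
    LaurentPolynomial ℤ :=
  T (((Finset.univ.filter fun c => s c = true).card : ℤ) -
      ((Finset.univ.filter fun c => s c = false).card : ℤ)) *
    (-T 2 - T (-2)) ^ (Gamma d C s - 1)

/-- The bracket polynomial `⟨C⟩ = Σ_s ⟨C|s⟩`, summing over all `2^d` states of `C`. -/
noncomputable def bracket (d : ℕ) (C : Finset (ℤ × ℤ)) : LaurentPolynomial ℤ :=
  ∑ s : ({c // c ∈ C} → Bool), bracketTerm d C s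

/-- The maximal exponent occurring in a Laurent polynomial (junk value `0` for `f = 0`). -/
noncomputable def maxDeg (f : LaurentPolynomial ℤ) : ℤ := WithBot.unbotD 0 f.coeff.support.max

/-- The minimal exponent occurring in a Laurent polynomial (junk value `0` for `f = 0`). -/
noncomputable def minDeg (f : LaurentPolynomial ℤ) : ℤ := WithTop.untopD 0 f.coeff.support.min

/-- The span of a Laurent polynomial: maximal minus minimal exponent. -/
noncomputable def spanL (f : LaurentPolynomial ℤ) : ℤ := maxDeg f - minDeg f


namespace SpanAux


def Om (d : ℕ) : Set ℤ := Set.Icc 0 (2*(d:ℤ))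

def pr (a b : ℤ) : Setoid ℤ :=
  ⟨fun x y => x = y ∨ (x = a ∧ y = b) ∨ (x = b ∧ y = a), by
    refine ⟨fun x => Or.inl rfl, fun h => by tauto, fun h1 h2 => by
      rcases h1 with h|h|h <;> rcases h2 with g|g|g <;> simp_all⟩⟩

lemma pr_rel (a b : ℤ) : (pr a b).r a b := Or.inr (Or.inl ⟨rfl, rfl⟩)

lemma pr_le_iff {R : Setoid ℤ} {a b : ℤ} : pr a b ≤ R ↔ R.r a b := by
  constructor
  · intro h; exact h (pr_rel a b)
  · intro h x y hxy
    rcases hxy with rfl|⟨rfl,rfl⟩|⟨rfl,rfl⟩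
    · exact R.refl _
    · exact h
    · exact R.symm h

/-- closed form of `R ⊔ pr a b` -/
def prJoin (R : Setoid ℤ) (a b : ℤ) : Setoid ℤ :=
  ⟨fun x y => R.r x y ∨ (R.r x a ∧ R.r b y) ∨ (R.r x b ∧ R.r a y), by
    constructor
    · intro x; exact Or.inl (R.refl x)
    · intro x y h
      rcases h with h|⟨h1,h2⟩|⟨h1,h2⟩
      · exact Or.inl (R.symm h)
      · exact Or.inr (Or.inr ⟨R.symm h2, R.symm h1⟩)
      · exact Or.inr (Or.inl ⟨R.symm h2, R.symm h1⟩)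
    · intro x y z h1 h2
      rcases h1 with h|⟨h1,h1'⟩|⟨h1,h1'⟩ <;> rcases h2 with g|⟨g1,g1'⟩|⟨g1,g1'⟩
      · exact Or.inl (R.trans h g)
      · exact Or.inr (Or.inl ⟨R.trans h g1, g1'⟩)
      · exact Or.inr (Or.inr ⟨R.trans h g1, g1'⟩)
      · exact Or.inr (Or.inl ⟨h1, R.trans h1' g⟩)
      · exact Or.inl (R.trans (R.trans h1 (R.symm (R.trans h1' g1))) g1')
      · exact Or.inl (R.trans h1 g1')
      · exact Or.inr (Or.inr ⟨h1, R.trans h1' g⟩)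
      · exact Or.inl (R.trans h1 g1')
      · exact Or.inr (Or.inl ⟨R.trans h1 (R.symm (R.trans h1' g1)),
          R.trans (R.symm (R.trans h1' g1)) g1'⟩)⟩

lemma sup_pr_eq (R : Setoid ℤ) (a b : ℤ) : R ⊔ pr a b = prJoin R a b := by
  apply le_antisymm
  · apply sup_le
    · intro x y h; exact Or.inl h
    · intro x y h
      rcases h with rfl|⟨rfl,rfl⟩|⟨rfl,rfl⟩
      · exact Or.inl (R.refl _)
      · exact Or.inr (Or.inl ⟨R.refl _, R.refl _⟩)
      · exact Or.inr (Or.inr ⟨R.refl _, R.refl _⟩)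
  · intro x y h
    have h1 : R ≤ R ⊔ pr a b := le_sup_left
    have h2' : pr a b ≤ R ⊔ pr a b := le_sup_right
    have h2 : (R ⊔ pr a b).r a b := h2' (pr_rel a b)
    rcases h with h|⟨ha,hb⟩|⟨ha,hb⟩
    · exact h1 h
    · exact (R ⊔ pr a b).trans (h1 ha) ((R ⊔ pr a b).trans h2 (h1 hb))
    · exact (R ⊔ pr a b).trans (h1 ha)
        ((R ⊔ pr a b).trans ((R ⊔ pr a b).symm h2) (h1 hb))

lemma sup_pr_rel (R : Setoid ℤ) (a b x y : ℤ) :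
    (R ⊔ pr a b).r x y ↔ R.r x y ∨ (R.r x a ∧ R.r b y) ∨ (R.r x b ∧ R.r a y) := by
  rw [sup_pr_eq]; rfl


def cls (R : Setoid ℤ) (x : ℤ) : Set ℤ := {y | R.r x y}

lemma mem_cls {R : Setoid ℤ} {x y : ℤ} : y ∈ cls R x ↔ R.r x y := Iff.rfl

lemma cls_eq_iff {R : Setoid ℤ} {x y : ℤ} : cls R x = cls R y ↔ R.r x y := by
  constructor
  · intro h
    have : y ∈ cls R y := R.refl y
    rw [← h] at this; exact this
  · intro h; ext z; constructor
    · intro hz; exact R.trans (R.symm h) hz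
    · intro hz; exact R.trans h hz

noncomputable def cnt (d : ℕ) (R : Setoid ℤ) : ℕ := ((cls R) '' Om d).ncard

lemma Om_finite (d : ℕ) : (Om d).Finite := Set.finite_Icc _ _

lemma imp_finite (d : ℕ) (R : Setoid ℤ) : ((cls R) '' Om d).Finite :=
  (Om_finite d).image _

lemma zero_mem_Om (d : ℕ) : (0:ℤ) ∈ Om d := by
  simp [Om]

lemma cnt_pos (d : ℕ) (R : Setoid ℤ) : 1 ≤ cnt d R := by
  have : cls R 0 ∈ (cls R) '' Om d := ⟨0, zero_mem_Om d, rfl⟩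
  have h := Set.ncard_pos (imp_finite d R)
  exact h.2 ⟨_, this⟩

lemma cnt_mono {d : ℕ} {R R' : Setoid ℤ} (h : R ≤ R') : cnt d R' ≤ cnt d R := by
  classical
  have key : (cls R') '' Om d = (fun S => {y | ∃ x ∈ S, R'.r x y}) '' ((cls R) '' Om d) := by
    rw [Set.image_image]
    apply Set.image_congr
    intro x _
    ext y
    simp only [Set.mem_setOf_eq, mem_cls]
    constructor
    · intro hy; exact ⟨x, R.refl x, hy⟩
    · rintro ⟨z, hz1, hz2⟩; exact R'.trans (h hz1) hz2
  rw [cnt, key]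
  exact Set.ncard_image_le (imp_finite d R)


lemma sup_pr_of_rel {R : Setoid ℤ} {a b : ℤ} (h : R.r a b) : R ⊔ pr a b = R :=
  sup_eq_left.2 (pr_le_iff.2 h)

lemma cnt_sup_pr_merge {d : ℕ} {R : Setoid ℤ} {a b : ℤ}
    (ha : a ∈ Om d) (hb : b ∈ Om d) (hne : ¬ R.r a b) :
    cnt d (R ⊔ pr a b) + 1 = cnt d R := by
  classical
  set A := cls R a with hA
  set B := cls R b with hB
  have hAB : A ≠ B := fun h => hne (cls_eq_iff.1 h)
  set imp := (cls R) '' Om d with himp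
  have hBi : B ∈ imp := ⟨b, hb, rfl⟩
  have hAi : A ∈ imp := ⟨a, ha, rfl⟩
  set φ : Set ℤ → Set ℤ := fun S => if S = A ∨ S = B then A ∪ B else S with hφ
  -- pointwise description of classes of the join
  have step1 : ∀ x, cls (R ⊔ pr a b) x = φ (cls R x) := by
    intro x
    by_cases hxa : R.r x a
    · have hxb : ¬ R.r x b := fun h => hne (R.trans (R.symm hxa) h)
      have h1 : cls R x = A := cls_eq_iff.2 hxa
      rw [h1]
      simp only [hφ, if_pos (Or.inl rfl)]
      ext y
      rw [mem_cls, sup_pr_rel]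
      constructor
      · rintro (h|⟨h1',h2⟩|⟨h1',h2⟩)
        · exact Or.inl (R.trans (R.symm hxa) h)
        · exact Or.inr h2
        · exact absurd h1' hxb
      · rintro (h|h)
        · exact Or.inl (R.trans hxa h)
        · exact Or.inr (Or.inl ⟨hxa, h⟩)
    · by_cases hxb : R.r x b
      · have h1 : cls R x = B := cls_eq_iff.2 hxb
        rw [h1]
        simp only [hφ, if_pos (Or.inr rfl)]
        ext y
        rw [mem_cls, sup_pr_rel]
        constructor
        · rintro (h|⟨h1',h2⟩|⟨h1',h2⟩)
          · exact Or.inr (R.trans (R.symm hxb) h)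
          · exact absurd h1' hxa
          · exact Or.inl h2
        · rintro (h|h)
          · exact Or.inr (Or.inr ⟨hxb, h⟩)
          · exact Or.inl (R.trans hxb h)
      · have h1 : cls R x ≠ A := fun h => hxa (cls_eq_iff.1 h)
        have h2 : cls R x ≠ B := fun h => hxb (cls_eq_iff.1 h)
        simp only [hφ, if_neg (not_or.2 ⟨h1, h2⟩)]
        ext y
        rw [mem_cls, sup_pr_rel]
        constructor
        · rintro (h|⟨h1',h2'⟩|⟨h1',h2'⟩)
          · exact h
          · exact absurd h1' hxa
          · exact absurd h1' hxb
        · intro h; exact Or.inl h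
  have step2 : (cls (R ⊔ pr a b)) '' Om d = φ '' imp := by
    rw [himp, Set.image_image]
    exact Set.image_congr fun x _ => step1 x
  -- injectivity off B
  have notclsAB : ∀ S ∈ imp, S ≠ A → S ≠ B → S ≠ A ∪ B := by
    rintro S ⟨x, _, rfl⟩ h1 h2 hc
    have : b ∈ cls R x := by rw [hc]; exact Or.inr (R.refl b)
    exact h2 (cls_eq_iff.2 this)
  have step3 : Set.InjOn φ (imp \ {B}) := by
    rintro S ⟨hS, hSB⟩ T ⟨hT, hTB⟩ hST
    simp only [Set.mem_singleton_iff] at hSB hTB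
    by_cases h1 : S = A
    · by_cases h2 : T = A
      · rw [h1, h2]
      · exfalso
        have hT' : φ T = T := by simp only [hφ, if_neg (not_or.2 ⟨h2, hTB⟩)]
        have hS' : φ S = A ∪ B := by simp only [hφ, h1, if_pos (Or.inl rfl)]
        exact notclsAB T hT h2 hTB (by rw [← hST, hS'] at hT'; exact hT'.symm)
    · have hS' : φ S = S := by simp only [hφ, if_neg (not_or.2 ⟨h1, hSB⟩)]
      by_cases h2 : T = A
      · exfalso
        have hT' : φ T = A ∪ B := by simp only [hφ, h2, if_pos (Or.inl rfl)]
        exact notclsAB S hS h1 hSB (by rw [hST, hT'] at hS'; exact hS'.symm)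
      · have hT' : φ T = T := by simp only [hφ, if_neg (not_or.2 ⟨h2, hTB⟩)]
        rw [← hS', ← hT', hST]
  have step4 : φ '' imp = φ '' (imp \ {B}) := by
    apply Set.Subset.antisymm
    · rintro _ ⟨S, hS, rfl⟩
      by_cases h : S = B
      · refine ⟨A, ⟨hAi, by simp [hAB]⟩, ?_⟩
        simp only [hφ, h, if_pos (Or.inr rfl), if_pos (Or.inl rfl)]
      · exact ⟨S, ⟨hS, by simp [h]⟩, rfl⟩
    · exact Set.image_mono (Set.diff_subset)
  have hfin : imp.Finite := imp_finite d R
  have c1 : cnt d (R ⊔ pr a b) = (imp \ {B}).ncard := by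
    rw [cnt, step2, step4, Set.ncard_image_of_injOn step3]
  have c2 : (imp \ {B}).ncard + 1 = imp.ncard := by
    rw [Set.ncard_diff_singleton_of_mem hBi]
    have : 1 ≤ imp.ncard := (Set.ncard_pos hfin).2 ⟨_, hBi⟩
    omega
  rw [c1]; exact c2

lemma cnt_sup_pr_le {d : ℕ} (R : Setoid ℤ) (a b : ℤ) : cnt d (R ⊔ pr a b) ≤ cnt d R :=
  cnt_mono le_sup_left

lemma cnt_le_sup_pr {d : ℕ} {R : Setoid ℤ} {a b : ℤ} (ha : a ∈ Om d) (hb : b ∈ Om d) :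
    cnt d R ≤ cnt d (R ⊔ pr a b) + 1 := by
  by_cases h : R.r a b
  · rw [sup_pr_of_rel h]; omega
  · rw [cnt_sup_pr_merge ha hb h]

lemma cnt_bot (d : ℕ) : cnt d (⊥ : Setoid ℤ) = 2*d + 1 := by
  have h1 : Set.InjOn (cls (⊥ : Setoid ℤ)) (Om d) := by
    intro x _ y _ h
    exact cls_eq_iff.1 h
  rw [cnt, Set.ncard_image_of_injOn h1]
  rw [Om, ← Finset.coe_Icc, Set.ncard_coe_finset, Int.card_Icc]
  simp
  omega

/-- `a` is a singleton class of `R` -/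
def sing (R : Setoid ℤ) (a : ℤ) : Prop := ∀ y, R.r a y → y = a

lemma sing_bot (a : ℤ) : sing (⊥ : Setoid ℤ) a := fun y h => h.symm

lemma sing_of_le {R T : Setoid ℤ} {a : ℤ} (h : R ≤ T) (hT : sing T a) : sing R a :=
  fun y hy => hT y (h hy)

def iso (a : ℤ) : Setoid ℤ :=
  ⟨fun x y => x = y ∨ (x ≠ a ∧ y ≠ a), by
    refine ⟨fun x => Or.inl rfl, fun h => by tauto, fun h1 h2 => by rcases h1 with rfl|⟨u1,u2⟩ <;> rcases h2 with rfl|⟨v1,v2⟩ <;> tauto⟩⟩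

lemma sing_iff_le_iso {R : Setoid ℤ} {a : ℤ} : sing R a ↔ R ≤ iso a := by
  constructor
  · intro h x y hxy
    by_cases hx : x = a
    · subst hx; exact Or.inl (h y hxy).symm
    · refine Or.inr ⟨hx, fun hy => ?_⟩
      subst hy
      exact hx (h x (R.symm hxy))
  · intro h y hy
    rcases h hy with h'|⟨h1,_⟩
    · exact h'.symm
    · exact absurd rfl h1

lemma sing_sup {R S : Setoid ℤ} {a : ℤ} (h1 : sing R a) (h2 : sing S a) :
    sing (R ⊔ S) a :=
  sing_iff_le_iso.2 (sup_le (sing_iff_le_iso.1 h1) (sing_iff_le_iso.1 h2))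

lemma sing_pr {a u v : ℤ} (hu : a ≠ u) (hv : a ≠ v) : sing (pr u v) a := by
  rintro y (rfl|⟨rfl,rfl⟩|⟨rfl,rfl⟩)
  · rfl
  · exact absurd rfl hu
  · exact absurd rfl hv

lemma not_rel_of_sing {R : Setoid ℤ} {a e : ℤ} (h : sing R a) (hne : a ≠ e) :
    ¬ R.r a e := fun hr => hne ((h e hr).symm)

lemma cnt_sup_pr_sing {d : ℕ} {R : Setoid ℤ} {a e : ℤ}
    (ha : a ∈ Om d) (he : e ∈ Om d) (hs : sing R a) (hne : a ≠ e) :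
    cnt d (R ⊔ pr a e) + 1 = cnt d R :=
  cnt_sup_pr_merge ha he (not_rel_of_sing hs hne)

lemma pr_comm (a b : ℤ) : pr a b = pr b a := by
  apply Setoid.ext; intro x y
  show _ ∨ _ ↔ _ ∨ _
  tauto

/-- the two partitions attached to a chord -/
def mypi (c : ℤ × ℤ) (lbl : Bool) : Setoid ℤ :=
  if lbl = decide (c.1 < c.2) then pr c.1 (c.2 - 1) ⊔ pr (c.1 - 1) c.2
  else pr c.1 c.2 ⊔ pr (c.1 - 1) (c.2 - 1)

lemma rel_of_swap_smul {R : Setoid ℤ} {u v : ℤ} (h : pr u v ≤ R) (x : ℤ) :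
    R.r x (Equiv.swap u v • x) := by
  rcases eq_or_ne x u with rfl|hu
  · rw [Equiv.Perm.smul_def, Equiv.swap_apply_left]; exact h (pr_rel _ _)
  rcases eq_or_ne x v with rfl|hv
  · rw [Equiv.Perm.smul_def, Equiv.swap_apply_right]; exact R.symm (h (pr_rel _ _))
  · rw [Equiv.Perm.smul_def, Equiv.swap_apply_of_ne_of_ne hu hv]

lemma swap_mem_cases {σ : Equiv.Perm ℤ} {lbl : Bool} {c : ℤ×ℤ} (h : σ ∈ Rset lbl c) :
    ∃ u v, σ = Equiv.swap u v ∧ pr u v ≤ mypi c lbl := by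
  by_cases hc : lbl = decide (c.1 < c.2)
  · rw [Rset, if_pos hc] at h
    rw [mypi, if_pos hc]
    rcases h with h|h
    · exact ⟨c.1, c.2 - 1, h, le_sup_left⟩
    · exact ⟨c.1 - 1, c.2, h, le_sup_right⟩
  · rw [Rset, if_neg hc] at h
    rw [mypi, if_neg hc]
    rcases h with h|h
    · exact ⟨c.1, c.2, h, le_sup_left⟩
    · exact ⟨c.1 - 1, c.2 - 1, h, le_sup_right⟩

/-- join of state partitions over a finset of chords, for a total state -/
def stSet (D : Finset (ℤ × ℤ)) (s : ℤ × ℤ → Bool) : Setoid ℤ := ⨆ c ∈ D, mypi c (s c)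

lemma mypi_le_stSet {D : Finset (ℤ × ℤ)} {s : ℤ × ℤ → Bool} {c : ℤ×ℤ} (hc : c ∈ D) :
    mypi c (s c) ≤ stSet D s := by
  apply le_iSup_of_le c
  exact le_iSup_of_le hc le_rfl

lemma orbit_eq_cls (C : Finset (ℤ × ℤ)) (s : {c // c ∈ C} → Bool)
    (sx : ℤ × ℤ → Bool) (hsx : ∀ c : {c // c ∈ C}, sx c.1 = s c) (x : ℤ) :
    MulAction.orbit (stateGroup C s) x = cls (stSet C sx) x := by
  set R := stSet C sx with hR
  have genle : ∀ σ ∈ (⋃ c : {c // c ∈ C}, Rset (s c) c.1), ∀ y, R.r y (σ • y) := by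
    intro σ hσ y
    rw [Set.mem_iUnion] at hσ
    obtain ⟨c, hc⟩ := hσ
    obtain ⟨u, v, rfl, hle⟩ := swap_mem_cases hc
    apply rel_of_swap_smul
    refine le_trans hle ?_
    rw [← hsx c]
    exact mypi_le_stSet c.2
  apply Set.Subset.antisymm
  · rintro y ⟨⟨g, hg⟩, rfl⟩
    have : ∀ (g : Equiv.Perm ℤ), g ∈ stateGroup C s → ∀ y, R.r y (g • y) := by
      intro g hg
      induction hg using Subgroup.closure_induction with
      | mem σ hσ => exact genle σ hσ
      | one => intro y; rw [one_smul]
      | mul g h _ _ hg hh =>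
        intro y
        rw [mul_smul]
        exact R.trans (hh y) (hg (h • y))
      | inv g _ hg =>
        intro y
        have := hg (g⁻¹ • y)
        rw [smul_inv_smul] at this
        exact R.symm this
    exact this g hg x
  · intro y hy
    have hle : R ≤ MulAction.orbitRel (stateGroup C s) ℤ := by
      rw [hR, stSet]
      apply iSup_le; intro c; apply iSup_le; intro hc
      have hc' : (⟨c, hc⟩ : {c // c ∈ C}).1 ∈ C := hc
      rw [show sx c = s ⟨c, hc⟩ from hsx ⟨c, hc⟩]
      rw [mypi]
      have swmem : ∀ u v : ℤ, Equiv.swap u v ∈ Rset (s ⟨c,hc⟩) c →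
          (MulAction.orbitRel (stateGroup C s) ℤ).r u v := by
        intro u v hsw
        have hg : Equiv.swap u v ∈ stateGroup C s := by
          apply Subgroup.subset_closure
          rw [Set.mem_iUnion]
          exact ⟨⟨c, hc⟩, hsw⟩
        show u ∈ MulAction.orbit (stateGroup C s) v
        exact ⟨⟨_, hg⟩, Equiv.swap_apply_right u v⟩
      by_cases hcc : s ⟨c,hc⟩ = decide (c.1 < c.2)
      · rw [if_pos hcc]
        apply sup_le
        · exact pr_le_iff.2 (swmem _ _ (by rw [Rset, if_pos hcc]; left; rfl))
        · exact pr_le_iff.2 (swmem _ _ (by rw [Rset, if_pos hcc]; right; rfl))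
      · rw [if_neg hcc]
        apply sup_le
        · exact pr_le_iff.2 (swmem _ _ (by rw [Rset, if_neg hcc]; left; rfl))
        · exact pr_le_iff.2 (swmem _ _ (by rw [Rset, if_neg hcc]; right; rfl))
    have h2 : (MulAction.orbitRel (stateGroup C s) ℤ).r x y := hle hy
    exact (MulAction.orbitRel (stateGroup C s) ℤ).symm h2

lemma Gamma_eq_cnt (d : ℕ) (C : Finset (ℤ × ℤ)) (s : {c // c ∈ C} → Bool)
    (sx : ℤ × ℤ → Bool) (hsx : ∀ c : {c // c ∈ C}, sx c.1 = s c) :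
    Gamma d C s = cnt d (stSet C sx) := by
  rw [Gamma, cnt]
  congr 1
  apply Set.image_congr
  intro x _
  exact orbit_eq_cls C s sx hsx x

/-- sorted gap coordinates of a chord -/
def gb (c : ℤ×ℤ) : ℤ := min c.1 c.2
def ge (c : ℤ×ℤ) : ℤ := max c.1 c.2
def ga (c : ℤ×ℤ) : ℤ := gb c - 1
def gc (c : ℤ×ℤ) : ℤ := ge c - 1

lemma mypi_cases (c : ℤ×ℤ) (hne : c.1 ≠ c.2) :
    (mypi c true = pr (gb c) (gc c) ⊔ pr (ga c) (ge c) ∧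
     mypi c false = pr (gb c) (ge c) ⊔ pr (ga c) (gc c)) ∨
    (mypi c true = pr (gb c) (ge c) ⊔ pr (ga c) (gc c) ∧
     mypi c false = pr (gb c) (gc c) ⊔ pr (ga c) (ge c)) := by
  rcases hne.lt_or_gt with h|h
  · left
    have hd : decide (c.1 < c.2) = true := decide_eq_true h
    have hb : gb c = c.1 := min_eq_left h.le
    have he : ge c = c.2 := max_eq_right h.le
    constructor
    · rw [mypi, if_pos (by rw [hd]), gc, ga, hb, he]
    · rw [mypi, if_neg (by rw [hd]; simp), gc, ga, hb, he]
  · right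
    have hd : decide (c.1 < c.2) = false := decide_eq_false (by omega)
    have hb : gb c = c.2 := min_eq_right h.le
    have he : ge c = c.1 := max_eq_left h.le
    constructor
    · rw [mypi, if_neg (by rw [hd]; simp), gc, ga, hb, he,
        pr_comm c.1 c.2, pr_comm (c.1-1) (c.2-1)]
    · rw [mypi, if_pos (by rw [hd]), gc, ga, hb, he, pr_comm c.1 (c.2-1),
        pr_comm (c.1-1) c.2, sup_comm]

/-- the clique partition of a chord -/
def clq (c : ℤ×ℤ) : Setoid ℤ :=
  pr (ga c) (gb c) ⊔ pr (gb c) (gc c) ⊔ pr (gc c) (ge c)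

lemma clq_rel_ab (c : ℤ×ℤ) : (clq c).r (ga c) (gb c) :=
  (le_sup_left.trans le_sup_left : pr (ga c) (gb c) ≤ clq c) (pr_rel _ _)
lemma clq_rel_bc (c : ℤ×ℤ) : (clq c).r (gb c) (gc c) :=
  (le_sup_right.trans le_sup_left : pr (gb c) (gc c) ≤ clq c) (pr_rel _ _)
lemma clq_rel_ce (c : ℤ×ℤ) : (clq c).r (gc c) (ge c) :=
  (le_sup_right : pr (gc c) (ge c) ≤ clq c) (pr_rel _ _)

lemma mypi_le_clq (c : ℤ×ℤ) (lbl : Bool) (hne : c.1 ≠ c.2) : mypi c lbl ≤ clq c := by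
  have h1 : pr (gb c) (gc c) ⊔ pr (ga c) (ge c) ≤ clq c := by
    apply sup_le
    · exact pr_le_iff.2 (clq_rel_bc c)
    · exact pr_le_iff.2 ((clq c).trans (clq_rel_ab c)
        ((clq c).trans (clq_rel_bc c) (clq_rel_ce c)))
  have h2 : pr (gb c) (ge c) ⊔ pr (ga c) (gc c) ≤ clq c := by
    apply sup_le
    · exact pr_le_iff.2 ((clq c).trans (clq_rel_bc c) (clq_rel_ce c))
    · exact pr_le_iff.2 ((clq c).trans (clq_rel_ab c) (clq_rel_bc c))
  rcases mypi_cases c hne with ⟨ht, hf⟩|⟨ht, hf⟩ <;> cases lbl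
  · rw [hf]; exact h2
  · rw [ht]; exact h1
  · rw [hf]; exact h1
  · rw [ht]; exact h2

/-- join of cliques -/
def TT (D : Finset (ℤ × ℤ)) : Setoid ℤ := ⨆ c ∈ D, clq c

lemma biSup_congr {D : Finset (ℤ×ℤ)} {f g : ℤ×ℤ → Setoid ℤ} (h : ∀ c ∈ D, f c = g c) :
    (⨆ c ∈ D, f c) = ⨆ c ∈ D, g c := by
  apply le_antisymm
  · apply iSup_le; intro c; apply iSup_le; intro hc
    rw [h c hc]; exact le_iSup_of_le c (le_iSup_of_le hc le_rfl)
  · apply iSup_le; intro c; apply iSup_le; intro hc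
    rw [← h c hc]; exact le_iSup_of_le c (le_iSup_of_le hc le_rfl)

lemma stSet_insert {D : Finset (ℤ×ℤ)} {c₀ : ℤ×ℤ} (s : ℤ×ℤ → Bool) (h : c₀ ∉ D) :
    stSet (insert c₀ D) s = mypi c₀ (s c₀) ⊔ stSet D s := by
  rw [stSet, Finset.iSup_insert]; rfl

lemma TT_insert {D : Finset (ℤ×ℤ)} {c₀ : ℤ×ℤ} (h : c₀ ∉ D) :
    TT (insert c₀ D) = clq c₀ ⊔ TT D := by
  rw [TT, Finset.iSup_insert]; rfl

lemma stSet_congr {D : Finset (ℤ×ℤ)} {s s' : ℤ×ℤ → Bool}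
    (h : ∀ c ∈ D, s c = s' c) : stSet D s = stSet D s' := by
  apply biSup_congr; intro c hc; rw [h c hc]

/-- core of the flip lemma -/
lemma flip_core {d : ℕ} (P : Setoid ℤ) {a b cc e : ℤ}
    (hb : b ∈ Om d) (hcc : cc ∈ Om d) (he : e ∈ Om d) :
    cnt d (P ⊔ (pr b e ⊔ pr a cc)) ≤ cnt d (P ⊔ (pr b cc ⊔ pr a e)) + 1 := by
  set Q1 := P ⊔ (pr b cc ⊔ pr a e) with hQ1
  set Q2 := P ⊔ (pr b e ⊔ pr a cc) with hQ2
  set F := Q1 ⊔ (pr b e ⊔ pr a cc) with hF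
  have hF1 : Q1 ⊔ pr b e = F := by
    apply le_antisymm
    · exact sup_le le_sup_left (le_sup_left.trans le_sup_right)
    · apply sup_le le_sup_left
      apply sup_le le_sup_right
      rw [pr_le_iff]
      set W := Q1 ⊔ pr b e with hW
      have rae : W.r a e :=
        ((le_sup_right.trans le_sup_right).trans le_sup_left : pr a e ≤ W) (pr_rel _ _)
      have rbe : W.r b e := (le_sup_right : pr b e ≤ W) (pr_rel _ _)
      have rbc : W.r b cc :=
        ((le_sup_left.trans le_sup_right).trans le_sup_left : pr b cc ≤ W) (pr_rel _ _)
      exact W.trans rae (W.trans (W.symm rbe) rbc)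
  have hF2 : Q2 ⊔ pr b cc = F := by
    apply le_antisymm
    · apply sup_le
      · apply sup_le (le_sup_left.trans le_sup_left) le_sup_right
      · exact (le_sup_left.trans le_sup_right).trans le_sup_left
    · apply sup_le
      · apply sup_le (le_sup_left.trans (le_sup_left : Q2 ≤ Q2 ⊔ pr b cc))
        apply sup_le le_sup_right
        rw [pr_le_iff]
        set W := Q2 ⊔ pr b cc with hW
        have rac : W.r a cc :=
          ((le_sup_right.trans le_sup_right).trans le_sup_left : pr a cc ≤ W) (pr_rel _ _)
        have rbe : W.r b e :=
          ((le_sup_left.trans le_sup_right).trans le_sup_left : pr b e ≤ W) (pr_rel _ _)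
        have rbc : W.r b cc := (le_sup_right : pr b cc ≤ W) (pr_rel _ _)
        exact W.trans rac (W.trans (W.symm rbc) rbe)
      · exact le_sup_right.trans le_sup_left
  calc cnt d Q2 ≤ cnt d (Q2 ⊔ pr b cc) + 1 := cnt_le_sup_pr hb hcc
    _ = cnt d F + 1 := by rw [hF2]
    _ = cnt d (Q1 ⊔ pr b e) + 1 := by rw [hF1]
    _ ≤ cnt d Q1 + 1 := by
        have := cnt_sup_pr_le (d := d) Q1 b e
        omega

/-- validity of a chord -/
def OK (d : ℕ) (c : ℤ×ℤ) : Prop :=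
  c.1 ≠ c.2 ∧ (1 ≤ c.1 ∧ c.1 ≤ 2*(d:ℤ)) ∧ (1 ≤ c.2 ∧ c.2 ≤ 2*(d:ℤ))

lemma OK.gb_lt_ge {d : ℕ} {c : ℤ×ℤ} (h : OK d c) : gb c < ge c := by
  rcases h with ⟨h1, _, _⟩
  rcases h1.lt_or_gt with h|h
  · rw [gb, ge, min_eq_left h.le, max_eq_right h.le]; exact h
  · rw [gb, ge, min_eq_right h.le, max_eq_left h.le]; exact h

lemma OK.bounds {d : ℕ} {c : ℤ×ℤ} (h : OK d c) :
    1 ≤ gb c ∧ ge c ≤ 2*(d:ℤ) := by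
  rcases h with ⟨_, ⟨h1,h2⟩, ⟨h3,h4⟩⟩
  constructor
  · exact le_min h1 h3
  · exact max_le h2 h4

lemma OK.mem_Om {d : ℕ} {c : ℤ×ℤ} (h : OK d c) :
    ga c ∈ Om d ∧ gb c ∈ Om d ∧ gc c ∈ Om d ∧ ge c ∈ Om d := by
  have h1 := h.bounds
  have h2 := h.gb_lt_ge
  simp only [Om, Set.mem_Icc, ga, gc]
  omega

lemma stSet_le_TT {d : ℕ} {D : Finset (ℤ×ℤ)} {s : ℤ×ℤ → Bool}
    (hok : ∀ c ∈ D, OK d c) : stSet D s ≤ TT D := by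
  apply iSup_le; intro c; apply iSup_le; intro hc
  exact le_trans (mypi_le_clq c _ (hok c hc).1)
    (le_iSup_of_le c (le_iSup_of_le hc le_rfl))

lemma sing_TT {D : Finset (ℤ×ℤ)} {a : ℤ}
    (h : ∀ c ∈ D, a ≠ ga c ∧ a ≠ gb c ∧ a ≠ gc c ∧ a ≠ ge c) : sing (TT D) a := by
  rw [sing_iff_le_iso]
  apply iSup_le; intro c; apply iSup_le; intro hc
  obtain ⟨h1, h2, h3, h4⟩ := h c hc
  rw [← sing_iff_le_iso]
  exact sing_sup (sing_sup (sing_pr h1 h2) (sing_pr h2 h3)) (sing_pr h3 h4)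

/-- main computation in the induction step of the dual-state lemma -/
lemma step_core {d : ℕ} (P' Pb' T' : Setoid ℤ) {a b cc e : ℤ}
    (hPT : P' ≤ T') (hPbT : Pb' ≤ T') (hsing : sing T' a)
    (hab : a ≠ b) (hae : a ≠ e) (hac : a ≠ cc)
    (ha : a ∈ Om d) (hb : b ∈ Om d) (hcc : cc ∈ Om d) (he : e ∈ Om d) :
    cnt d ((pr b cc ⊔ pr a e) ⊔ P') + cnt d ((pr b e ⊔ pr a cc) ⊔ Pb') + 1 + cnt d T'
      ≤ cnt d P' + cnt d Pb' + cnt d (T' ⊔ (pr a b ⊔ pr b cc ⊔ pr cc e)) := by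
  have hre1 : (pr b cc ⊔ pr a e) ⊔ P' = (P' ⊔ pr b cc) ⊔ pr a e := by
    rw [sup_comm, sup_assoc]
  have hre2 : (pr b e ⊔ pr a cc) ⊔ Pb' = (Pb' ⊔ pr b e) ⊔ pr a cc := by
    rw [sup_comm, sup_assoc]
  have hre3 : T' ⊔ (pr a b ⊔ pr b cc ⊔ pr cc e) = ((T' ⊔ pr a b) ⊔ pr b cc) ⊔ pr cc e := by
    rw [← sup_assoc, ← sup_assoc]
  rw [hre1, hre2, hre3]
  -- the two `a`-merges
  have e1 : cnt d ((P' ⊔ pr b cc) ⊔ pr a e) + 1 = cnt d (P' ⊔ pr b cc) :=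
    cnt_sup_pr_sing ha he
      (sing_sup (sing_of_le hPT hsing) (sing_pr hab hac)) hae
  have e2 : cnt d ((Pb' ⊔ pr b e) ⊔ pr a cc) + 1 = cnt d (Pb' ⊔ pr b e) :=
    cnt_sup_pr_sing ha hcc
      (sing_sup (sing_of_le hPbT hsing) (sing_pr hab hae)) hac
  have f1 : cnt d (T' ⊔ pr a b) + 1 = cnt d T' :=
    cnt_sup_pr_sing ha hb hsing hab
  by_cases h1 : P'.r b cc
  · have g1 : cnt d (P' ⊔ pr b cc) = cnt d P' := by rw [sup_pr_of_rel h1]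
    have g1' : cnt d ((T' ⊔ pr a b) ⊔ pr b cc) = cnt d (T' ⊔ pr a b) := by
      rw [sup_pr_of_rel ((le_sup_left : T' ≤ T' ⊔ pr a b) (hPT h1))]
    by_cases h2 : Pb'.r b e
    · have g2 : cnt d (Pb' ⊔ pr b e) = cnt d Pb' := by rw [sup_pr_of_rel h2]
      have g2' : cnt d (((T' ⊔ pr a b) ⊔ pr b cc) ⊔ pr cc e)
          = cnt d ((T' ⊔ pr a b) ⊔ pr b cc) := by
        apply congrArg
        apply sup_pr_of_rel
        set W := (T' ⊔ pr a b) ⊔ pr b cc with hW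
        have rbc : W.r b cc := (le_sup_right : pr b cc ≤ W) (pr_rel _ _)
        have rbe : W.r b e := (le_sup_left : T' ⊔ pr a b ≤ W) ((le_sup_left : T' ≤ T' ⊔ pr a b) (hPbT h2))
        exact W.trans (W.symm rbc) rbe
      omega
    · have g2 : cnt d (Pb' ⊔ pr b e) + 1 = cnt d Pb' := cnt_sup_pr_merge hb he h2
      have g2' : cnt d ((T' ⊔ pr a b) ⊔ pr b cc)
          ≤ cnt d (((T' ⊔ pr a b) ⊔ pr b cc) ⊔ pr cc e) + 1 := cnt_le_sup_pr hcc he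
      omega
  · have g1 : cnt d (P' ⊔ pr b cc) + 1 = cnt d P' := cnt_sup_pr_merge hb hcc h1
    have g1' : cnt d (T' ⊔ pr a b) ≤ cnt d ((T' ⊔ pr a b) ⊔ pr b cc) + 1 :=
      cnt_le_sup_pr hb hcc
    by_cases h2 : Pb'.r b e
    · have g2 : cnt d (Pb' ⊔ pr b e) = cnt d Pb' := by rw [sup_pr_of_rel h2]
      have g2' : cnt d (((T' ⊔ pr a b) ⊔ pr b cc) ⊔ pr cc e)
          = cnt d ((T' ⊔ pr a b) ⊔ pr b cc) := by
        apply congrArg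
        apply sup_pr_of_rel
        set W := (T' ⊔ pr a b) ⊔ pr b cc with hW
        have rbc : W.r b cc := (le_sup_right : pr b cc ≤ W) (pr_rel _ _)
        have rbe : W.r b e := (le_sup_left : T' ⊔ pr a b ≤ W) ((le_sup_left : T' ≤ T' ⊔ pr a b) (hPbT h2))
        exact W.trans (W.symm rbc) rbe
      omega
    · have g2 : cnt d (Pb' ⊔ pr b e) + 1 = cnt d Pb' := cnt_sup_pr_merge hb he h2
      have g2' : cnt d ((T' ⊔ pr a b) ⊔ pr b cc)
          ≤ cnt d (((T' ⊔ pr a b) ⊔ pr b cc) ⊔ pr cc e) + 1 := cnt_le_sup_pr hcc he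
      omega

lemma stSet_empty (s : ℤ×ℤ → Bool) : stSet ∅ s = ⊥ := by simp [stSet]

lemma TT_empty : TT ∅ = ⊥ := by simp [TT]

/-- the dual-state lemma -/
lemma dual_state {d : ℕ} : ∀ (n : ℕ) (D : Finset (ℤ×ℤ)), D.card = n →
    (∀ c ∈ D, OK d c) →
    (∀ c ∈ D, ∀ c' ∈ D, c ≠ c' → c.1 ≠ c'.1 ∧ c.1 ≠ c'.2 ∧ c.2 ≠ c'.1 ∧ c.2 ≠ c'.2) →
    ∀ s : ℤ×ℤ → Bool,
    cnt d (stSet D s) + cnt d (stSet D (fun c => !(s c))) + D.card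
      ≤ cnt d (TT D) + (2*d+1) := by
  intro n
  induction n with
  | zero =>
    intro D hcard hok hsep s
    have hD : D = ∅ := Finset.card_eq_zero.1 hcard
    subst hD
    rw [stSet_empty, stSet_empty, TT_empty, cnt_bot]
    simp
  | succ n ih =>
    intro D hcard hok hsep s
    have hne : D.Nonempty := by rw [← Finset.card_pos, hcard]; omega
    obtain ⟨c₀, hc₀, hmin⟩ := Finset.exists_min_image D (fun c => gb c) hne
    set D' := D.erase c₀ with hD'
    have hins : D = insert c₀ D' := (Finset.insert_erase hc₀).symm
    have hnotmem : c₀ ∉ D' := Finset.notMem_erase _ _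
    have hcard' : D'.card = n := by
      rw [hD', Finset.card_erase_of_mem hc₀, hcard]
      omega
    have hmemD : ∀ c' ∈ D', c' ∈ D ∧ c' ≠ c₀ := by
      intro c' hc'
      rw [hD', Finset.mem_erase] at hc'
      exact ⟨hc'.2, hc'.1⟩
    have hok' : ∀ c ∈ D', OK d c := fun c hc => hok c (hmemD c hc).1
    have hsep' : ∀ c ∈ D', ∀ c' ∈ D', c ≠ c' →
        c.1 ≠ c'.1 ∧ c.1 ≠ c'.2 ∧ c.2 ≠ c'.1 ∧ c.2 ≠ c'.2 :=
      fun c hc c' hc' h => hsep c (hmemD c hc).1 c' (hmemD c' hc').1 h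
    obtain ⟨hga, hgb, hgc, hge⟩ := (hok c₀ hc₀).mem_Om
    have hlt := (hok c₀ hc₀).gb_lt_ge
    have hne_ab : ga c₀ ≠ gb c₀ := by rw [ga]; omega
    have hne_ae : ga c₀ ≠ ge c₀ := by rw [ga]; omega
    have hne_ac : ga c₀ ≠ gc c₀ := by rw [ga, gc]; omega
    -- every chord of `D'` lives strictly to the right of `gb c₀`
    have hright : ∀ c' ∈ D', gb c₀ < gb c' := by
      intro c' hc'
      obtain ⟨hcD, hne0⟩ := hmemD c' hc'
      have h1 : gb c₀ ≤ gb c' := hmin c' hcD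
      have h2 := hsep c' hcD c₀ hc₀ hne0
      have h3 : gb c' = c'.1 ∨ gb c' = c'.2 := min_choice _ _
      have h4 : gb c₀ = c₀.1 ∨ gb c₀ = c₀.2 := min_choice _ _
      rcases h3 with h3|h3 <;> rcases h4 with h4|h4 <;> omega
    have hiso : sing (TT D') (ga c₀) := by
      apply sing_TT
      intro c' hc'
      have h1 := hright c' hc'
      have h2 : gb c' ≤ ge c' := min_le_max
      rw [ga, ga, gc]
      constructor; omega
      constructor; omega
      constructor; omega
      omega
    have hPT : stSet D' s ≤ TT D' := stSet_le_TT hok'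
    have hPbT : stSet D' (fun c => !(s c)) ≤ TT D' := stSet_le_TT hok'
    have hIH := ih D' hcard' hok' hsep' s
    rw [hins, stSet_insert s hnotmem, stSet_insert _ hnotmem, TT_insert hnotmem,
      Finset.card_insert_of_notMem hnotmem]
    rw [sup_comm (clq c₀) (TT D'), clq]
    rcases mypi_cases c₀ (hok c₀ hc₀).1 with ⟨ht, hf⟩|⟨ht, hf⟩ <;> cases hsc : s c₀
    · -- mypi true = bc⊔ae ; s c₀ = false
      simp only [hsc, Bool.not_false, ht, hf]
      have hstep := step_core (d := d) (stSet D' (fun c => !(s c))) (stSet D' s) (TT D')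
        hPbT hPT hiso hne_ab hne_ae hne_ac hga hgb hgc hge
      omega
    · simp only [hsc, Bool.not_true, ht, hf]
      have hstep := step_core (d := d) (stSet D' s) (stSet D' (fun c => !(s c))) (TT D')
        hPT hPbT hiso hne_ab hne_ae hne_ac hga hgb hgc hge
      omega
    · simp only [hsc, Bool.not_false, ht, hf]
      have hstep := step_core (d := d) (stSet D' s) (stSet D' (fun c => !(s c))) (TT D')
        hPT hPbT hiso hne_ab hne_ae hne_ac hga hgb hgc hge
      omega
    · simp only [hsc, Bool.not_true, ht, hf]
      have hstep := step_core (d := d) (stSet D' (fun c => !(s c))) (stSet D' s) (TT D')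
        hPbT hPT hiso hne_ab hne_ae hne_ac hga hgb hgc hge
      omega

lemma flip_one {d : ℕ} {D : Finset (ℤ×ℤ)} {s s' : ℤ×ℤ → Bool} {c₀ : ℤ×ℤ}
    (hc₀ : c₀ ∈ D) (hok : OK d c₀) (hagree : ∀ c ∈ D, c ≠ c₀ → s c = s' c) :
    cnt d (stSet D s') ≤ cnt d (stSet D s) + 1 := by
  set D' := D.erase c₀ with hD'
  have hins : D = insert c₀ D' := (Finset.insert_erase hc₀).symm
  have hnotmem : c₀ ∉ D' := Finset.notMem_erase _ _
  have hPP : stSet D' s = stSet D' s' := by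
    apply stSet_congr
    intro c hc
    rw [hD', Finset.mem_erase] at hc
    exact hagree c hc.2 hc.1
  rw [hins, stSet_insert s hnotmem, stSet_insert s' hnotmem, ← hPP]
  rw [sup_comm (mypi c₀ (s c₀)), sup_comm (mypi c₀ (s' c₀))]
  obtain ⟨hga, hgb, hgc, hge⟩ := hok.mem_Om
  by_cases hlab : s c₀ = s' c₀
  · rw [hlab]; omega
  · rcases mypi_cases c₀ hok.1 with ⟨ht, hf⟩|⟨ht, hf⟩ <;>
      cases hv : s c₀ <;> cases hv' : s' c₀ <;>
        (try (exfalso; rw [hv, hv'] at hlab; exact hlab rfl)) <;>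
        rw [ht, hf]
    · exact flip_core _ hgb hge hgc
    · exact flip_core _ hgb hgc hge
    · exact flip_core _ hgb hgc hge
    · exact flip_core _ hgb hge hgc

lemma cnt_le_flips {d : ℕ} {D : Finset (ℤ×ℤ)} (hok : ∀ c ∈ D, OK d c) :
    ∀ (n : ℕ) (s t : ℤ×ℤ → Bool), (D.filter (fun c => ¬ s c = t c)).card = n →
    cnt d (stSet D t) ≤ cnt d (stSet D s) + n := by
  intro n
  induction n with
  | zero =>
    intro s t hcard
    have h0 : ∀ c ∈ D, s c = t c := by
      intro c hc
      by_contra hcon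
      have : c ∈ D.filter (fun c => ¬ s c = t c) := Finset.mem_filter.2 ⟨hc, hcon⟩
      rw [Finset.card_eq_zero.1 hcard] at this
      exact absurd this (Finset.notMem_empty c)
    rw [stSet_congr h0]
    omega
  | succ n ih =>
    intro s t hcard
    have hne : (D.filter (fun c => ¬ s c = t c)).Nonempty := by
      rw [← Finset.card_pos, hcard]; omega
    obtain ⟨c₀, hc₀f⟩ := hne
    obtain ⟨hc₀D, hc₀ne⟩ := Finset.mem_filter.1 hc₀f
    classical
    set s₁ := Function.update s c₀ (t c₀) with hs₁
    have hflip : cnt d (stSet D s₁) ≤ cnt d (stSet D s) + 1 := by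
      apply flip_one hc₀D (hok c₀ hc₀D)
      intro c _ hcne
      rw [hs₁, Function.update_of_ne hcne]
    have hfilter : D.filter (fun c => ¬ s₁ c = t c) = (D.filter (fun c => ¬ s c = t c)).erase c₀ := by
      ext c
      rw [Finset.mem_erase, Finset.mem_filter, Finset.mem_filter]
      constructor
      · rintro ⟨hcD, hcne⟩
        have hne0 : c ≠ c₀ := by
          intro h; subst h
          rw [hs₁, Function.update_self] at hcne
          exact hcne rfl
        rw [hs₁, Function.update_of_ne hne0] at hcne
        exact ⟨hne0, hcD, hcne⟩
      · rintro ⟨hne0, hcD, hcne⟩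
        rw [hs₁, Function.update_of_ne hne0]
        exact ⟨hcD, hcne⟩
    have hcard1 : (D.filter (fun c => ¬ s₁ c = t c)).card = n := by
      rw [hfilter, Finset.card_erase_of_mem hc₀f, hcard]
      omega
    have := ih s₁ t hcard1
    omega

open Pointwise in
lemma bnd_mul {f g : LaurentPolynomial ℤ} {l1 h1 l2 h2 : ℤ}
    (hf : ∀ m ∈ f.coeff.support, l1 ≤ m ∧ m ≤ h1) (hg : ∀ m ∈ g.coeff.support, l2 ≤ m ∧ m ≤ h2) :
    ∀ m ∈ (f*g).coeff.support, l1 + l2 ≤ m ∧ m ≤ h1 + h2 := by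
  intro m hm
  have := AddMonoidAlgebra.support_coeff_mul_subset f g hm
  rw [Finset.mem_add] at this
  obtain ⟨a, ha, b, hb, rfl⟩ := this
  obtain ⟨ha1, ha2⟩ := hf a ha
  obtain ⟨hb1, hb2⟩ := hg b hb
  omega

lemma bnd_T (n : ℤ) : ∀ m ∈ (T n : LaurentPolynomial ℤ).coeff.support, n ≤ m ∧ m ≤ n := by
  intro m hm
  have h := Finsupp.mem_support_iff.1 hm
  rw [LaurentPolynomial.T_apply] at h
  split_ifs at h with h' <;> omega

lemma bnd_binom : ∀ m ∈ (-T 2 - T (-2) : LaurentPolynomial ℤ).coeff.support, -2 ≤ m ∧ m ≤ 2 := by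
  intro m hm
  rw [sub_eq_add_neg, AddMonoidAlgebra.coeff_add] at hm
  have h1 := Finsupp.support_add hm
  rw [Finset.mem_union, AddMonoidAlgebra.coeff_neg, AddMonoidAlgebra.coeff_neg, Finsupp.support_neg, Finsupp.support_neg] at h1
  rcases h1 with h|h
  · have := bnd_T 2 m h; omega
  · have := bnd_T (-2) m h; omega

lemma bnd_binom_pow (k : ℕ) :
    ∀ m ∈ ((-T 2 - T (-2) : LaurentPolynomial ℤ)^k).coeff.support,
      -(2*(k:ℤ)) ≤ m ∧ m ≤ 2*(k:ℤ) := by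
  induction k with
  | zero =>
    intro m hm
    rw [pow_zero] at hm
    have : ((1 : LaurentPolynomial ℤ)).coeff.support ⊆ {0} := by
      intro x hx
      have := bnd_T 0 x (by rwa [LaurentPolynomial.T_zero])
      exact Finset.mem_singleton.2 (by omega)
    have h2 := this hm
    rw [Finset.mem_singleton] at h2
    simp [h2]
  | succ k ih =>
    intro m hm
    rw [pow_succ] at hm
    have := bnd_mul ih bnd_binom m hm
    push_cast at this ⊢
    omega

lemma bnd_term (n : ℤ) (k : ℕ) :
    ∀ m ∈ ((T n * (-T 2 - T (-2))^k) : LaurentPolynomial ℤ).coeff.support,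
      n - 2*(k:ℤ) ≤ m ∧ m ≤ n + 2*(k:ℤ) := by
  intro m hm
  have := bnd_mul (bnd_T n) (bnd_binom_pow k) m hm
  omega

lemma span_le_of_bnd {f : LaurentPolynomial ℤ} {lo hi : ℤ} (hf : f ≠ 0)
    (h : ∀ m ∈ f.coeff.support, lo ≤ m ∧ m ≤ hi) : spanL f ≤ hi - lo := by
  have hne : f.coeff.support.Nonempty :=
    Finsupp.support_nonempty_iff.2 (fun h0 => hf (AddMonoidAlgebra.coeff_eq_zero.1 h0))
  have hmax : maxDeg f = f.coeff.support.max' hne := by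
    rw [maxDeg, ← Finset.coe_max' hne, WithBot.unbotD_coe]
  have hmin : minDeg f = f.coeff.support.min' hne := by
    rw [minDeg, ← Finset.coe_min' hne, WithTop.untopD_coe]
  have h1 := h _ (Finset.max'_mem f.coeff.support hne)
  have h2 := h _ (Finset.min'_mem f.coeff.support hne)
  rw [spanL, hmax, hmin]
  omega

/-- structural consequences of being an OLCD -/
lemma olcd_struct {d : ℕ} {C : Finset (ℤ×ℤ)} (hC : IsOLCD d C) :
    (∀ c ∈ C, OK d c) ∧
    (∀ c ∈ C, ∀ c' ∈ C, c ≠ c' → c.1 ≠ c'.1 ∧ c.1 ≠ c'.2 ∧ c.2 ≠ c'.1 ∧ c.2 ≠ c'.2) := by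
  classical
  obtain ⟨hcard, hun⟩ := hC
  set im1 := C.image Prod.fst with him1
  set im2 := C.image Prod.snd with him2
  have hIcc : (Finset.Icc 1 (2*(d:ℤ))).card = 2*d := by
    rw [Int.card_Icc]
    omega
  have hu : (im1 ∪ im2).card = 2*d := by rw [hun, hIcc]
  have h1 : im1.card ≤ d := le_trans (Finset.card_image_le) hcard.le
  have h2 : im2.card ≤ d := le_trans (Finset.card_image_le) hcard.le
  have hsum := Finset.card_union_add_card_inter im1 im2
  have hle : im1.card ≤ (im1 ∪ im2).card := Finset.card_le_card Finset.subset_union_left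
  have hinter : (im1 ∩ im2).card = 0 := by omega
  have h1' : im1.card = d := by omega
  have h2' : im2.card = d := by omega
  have hdisj : ∀ x, x ∈ im1 → x ∈ im2 → False := by
    intro x hx1 hx2
    have : x ∈ im1 ∩ im2 := Finset.mem_inter.2 ⟨hx1, hx2⟩
    rw [Finset.card_eq_zero.1 hinter] at this
    exact absurd this (Finset.notMem_empty x)
  have hinj1 : Set.InjOn Prod.fst (C : Set (ℤ×ℤ)) := by
    apply Finset.card_image_iff.1
    rw [← him1, h1', hcard]
  have hinj2 : Set.InjOn Prod.snd (C : Set (ℤ×ℤ)) := by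
    apply Finset.card_image_iff.1
    rw [← him2, h2', hcard]
  have hm1 : ∀ c ∈ C, c.1 ∈ im1 := fun c hc => Finset.mem_image.2 ⟨c, hc, rfl⟩
  have hm2 : ∀ c ∈ C, c.2 ∈ im2 := fun c hc => Finset.mem_image.2 ⟨c, hc, rfl⟩
  have hbd : ∀ x ∈ im1 ∪ im2, 1 ≤ x ∧ x ≤ 2*(d:ℤ) := by
    intro x hx
    rw [hun, Finset.mem_Icc] at hx
    exact hx
  constructor
  · intro c hc
    refine ⟨fun h => hdisj c.1 (hm1 c hc) (h ▸ hm2 c hc), ?_, ?_⟩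
    · exact hbd c.1 (Finset.mem_union_left _ (hm1 c hc))
    · exact hbd c.2 (Finset.mem_union_right _ (hm2 c hc))
  · intro c hc c' hc' hne
    refine ⟨?_, ?_, ?_, ?_⟩
    · exact fun h => hne (hinj1 hc hc' h)
    · exact fun h => hdisj c.1 (hm1 c hc) (h ▸ hm2 c' hc')
    · exact fun h => hdisj c'.1 (hm1 c' hc') (h ▸ hm2 c hc)
    · exact fun h => hne (hinj2 hc hc' h)

/-- total connectivity of the clique join -/
lemma cnt_TT_eq_one {d : ℕ} {C : Finset (ℤ×ℤ)} (hC : IsOLCD d C) :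
    cnt d (TT C) = 1 := by
  classical
  obtain ⟨hcard, hun⟩ := hC
  have hrel : ∀ p : ℤ, 1 ≤ p → p ≤ 2*(d:ℤ) → (TT C).r (p-1) p := by
    intro p h1 h2
    have hp : p ∈ C.image Prod.fst ∪ C.image Prod.snd := by
      rw [hun, Finset.mem_Icc]; exact ⟨h1, h2⟩
    have hex : ∃ c ∈ C, c.1 = p ∨ c.2 = p := by
      rw [Finset.mem_union, Finset.mem_image, Finset.mem_image] at hp
      rcases hp with ⟨c, hc, h⟩|⟨c, hc, h⟩
      · exact ⟨c, hc, Or.inl h⟩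
      · exact ⟨c, hc, Or.inr h⟩
    obtain ⟨c, hc, hcp⟩ := hex
    have hminmax : p = gb c ∨ p = ge c := by
      rcases le_total c.1 c.2 with h|h
      · rw [gb, ge, min_eq_left h, max_eq_right h]
        tauto
      · rw [gb, ge, min_eq_right h, max_eq_left h]
        tauto
    have hlift : clq c ≤ TT C := le_iSup_of_le c (le_iSup_of_le hc le_rfl)
    rcases hminmax with rfl|rfl
    · have := clq_rel_ab c
      rw [ga] at this
      exact hlift this
    · have := clq_rel_ce c
      rw [gc] at this
      exact hlift this
  have hrel0 : ∀ k : ℕ, (k:ℤ) ≤ 2*(d:ℤ) → (TT C).r 0 k := by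
    intro k
    induction k with
    | zero => intro _; exact (TT C).refl 0
    | succ k ih =>
      intro hk
      push_cast at hk ⊢
      have h1 := ih (by omega)
      have h2 := hrel ((k:ℤ)+1) (by omega) (by omega)
      have h3 : (k:ℤ) + 1 - 1 = (k:ℤ) := by omega
      rw [h3] at h2
      exact (TT C).trans h1 h2
  have hall : ∀ x ∈ Om d, (TT C).r 0 x := by
    intro x hx
    rw [Om, Set.mem_Icc] at hx
    have h1 : ((x.toNat : ℤ)) = x := Int.toNat_of_nonneg hx.1
    have := hrel0 x.toNat (by omega)
    rwa [h1] at this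
  have himg : (cls (TT C)) '' Om d = {cls (TT C) 0} := by
    apply Set.Subset.antisymm
    · rintro _ ⟨x, hx, rfl⟩
      simp only [Set.mem_singleton_iff]
      exact cls_eq_iff.2 ((TT C).symm (hall x hx))
    · rintro _ rfl
      exact ⟨0, zero_mem_Om d, rfl⟩
  rw [cnt, himg, Set.ncard_singleton]

end SpanAux

/-- For every oriented linear chord diagram `C` of `d` chords, if `⟨C⟩ ≠ 0`
then `span ⟨C⟩ ≤ 4d`. -/
theorem span_bracket_le (d : ℕ) (C : Finset (ℤ × ℤ)) (hC : IsOLCD d C)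
    (h : bracket d C ≠ 0) : spanL (bracket d C) ≤ 4 * d := by
  classical
  obtain ⟨hok, hsep⟩ := SpanAux.olcd_struct hC
  obtain ⟨hcard, hun⟩ := hC
  set tot : ({c // c ∈ C} → Bool) → (ℤ×ℤ → Bool) :=
    fun s c => if h : c ∈ C then s ⟨c, h⟩ else true with htot
  have hsx : ∀ (s : {c // c ∈ C} → Bool) (c : {c // c ∈ C}), tot s c.1 = s c := by
    intro s c
    simp only [htot, dif_pos c.2, Subtype.coe_eta]
  have hGam : ∀ s, Gamma d C s = SpanAux.cnt d (SpanAux.stSet C (tot s)) :=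
    fun s => SpanAux.Gamma_eq_cnt d C s (tot s) (hsx s)
  set ΓT := SpanAux.cnt d (SpanAux.stSet C (fun _ => true)) with hΓT
  set ΓF := SpanAux.cnt d (SpanAux.stSet C (fun _ => false)) with hΓF
  have hdual : ΓT + ΓF + d ≤ 2*d + 2 := by
    have h1 := SpanAux.dual_state (d := d) C.card C rfl hok hsep (fun _ => true)
    have h2 : (fun c : ℤ×ℤ => !(true : Bool)) = (fun _ : ℤ×ℤ => false) := rfl
    rw [h2, SpanAux.cnt_TT_eq_one ⟨hcard, hun⟩, hcard] at h1
    omega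
  -- counting states via the total extension
  have hcnt : ∀ (s : {c // c ∈ C} → Bool) (b : Bool),
      (C.filter (fun c => tot s c = b)).card = (Finset.univ.filter fun c => s c = b).card := by
    intro s b
    rw [Finset.univ_eq_attach]
    apply Finset.card_bij (fun (c : ℤ×ℤ) (hc : c ∈ C.filter (fun c => tot s c = b)) =>
      (⟨c, (Finset.mem_filter.1 hc).1⟩ : {c // c ∈ C}))
    · intro c hc
      obtain ⟨hc1, hc2⟩ := Finset.mem_filter.1 hc
      rw [Finset.mem_filter]
      refine ⟨Finset.mem_attach _ _, ?_⟩
      rw [← hsx s ⟨c, hc1⟩]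
      exact hc2
    · intro c1 hc1 c2 hc2 hh
      exact congrArg Subtype.val hh
    · intro c hcmem
      obtain ⟨_, hc2⟩ := Finset.mem_filter.1 hcmem
      refine ⟨c.1, Finset.mem_filter.2 ⟨c.2, ?_⟩, ?_⟩
      · rw [hsx s c]; exact hc2
      · simp
  -- flip bounds
  have hflipT : ∀ s : {c // c ∈ C} → Bool,
      Gamma d C s ≤ ΓT + (Finset.univ.filter fun c => s c = false).card := by
    intro s
    rw [hGam s, hΓT]
    have hfil : C.filter (fun c => ¬ (fun _ : ℤ×ℤ => true) c = tot s c)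
        = C.filter (fun c => tot s c = false) := by
      apply Finset.filter_congr
      intro c _
      cases htc : tot s c <;> simp
    have := SpanAux.cnt_le_flips hok
      ((C.filter (fun c => ¬ (fun _ : ℤ×ℤ => true) c = tot s c)).card)
      (fun _ => true) (tot s) rfl
    rw [hfil, hcnt s false] at this
    exact this
  have hflipF : ∀ s : {c // c ∈ C} → Bool,
      Gamma d C s ≤ ΓF + (Finset.univ.filter fun c => s c = true).card := by
    intro s
    rw [hGam s, hΓF]
    have hfil : C.filter (fun c => ¬ (fun _ : ℤ×ℤ => false) c = tot s c)
        = C.filter (fun c => tot s c = true) := by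
      apply Finset.filter_congr
      intro c _
      cases htc : tot s c <;> simp
    have := SpanAux.cnt_le_flips hok
      ((C.filter (fun c => ¬ (fun _ : ℤ×ℤ => false) c = tot s c)).card)
      (fun _ => false) (tot s) rfl
    rw [hfil, hcnt s true] at this
    exact this
  -- per-state support bounds
  set UB : ℤ := (d:ℤ) + 2*(ΓT:ℤ) - 2 with hUB
  set LB : ℤ := -(d:ℤ) - 2*(ΓF:ℤ) + 2 with hLB
  have hbound : ∀ (s : {c // c ∈ C} → Bool), ∀ m ∈ (bracketTerm d C s).coeff.support,
      LB ≤ m ∧ m ≤ UB := by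
    intro s m hm
    rw [bracketTerm] at hm
    have hbd := SpanAux.bnd_term _ _ m hm
    set aS := (Finset.univ.filter fun c => s c = true).card with haS
    set bS := (Finset.univ.filter fun c => s c = false).card with hbS
    have habd : aS + bS = d := by
      have := Finset.card_filter_add_card_filter_not
        (s := (Finset.univ : Finset {c // c ∈ C})) (p := fun c => s c = true)
      have hfil : Finset.univ.filter (fun c : {c // c ∈ C} => ¬ s c = true)
          = Finset.univ.filter (fun c => s c = false) := by
        apply Finset.filter_congr
        intro c _
        cases hsc : s c <;> simp
      rw [hfil] at this
      rw [haS, hbS, ← hcard, ← Fintype.card_coe C, ← Finset.card_univ]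
      exact this
    have h1 := hflipT s
    have h2 := hflipF s
    have hpos : 1 ≤ Gamma d C s := by
      rw [hGam s]; exact SpanAux.cnt_pos d _
    rw [hUB, hLB]
    omega
  -- assemble
  have hsupp : ∀ m ∈ (bracket d C).coeff.support, LB ≤ m ∧ m ≤ UB := by
    intro m hm
    rw [bracket, AddMonoidAlgebra.coeff_sum] at hm
    have := Finsupp.support_finset_sum hm
    rw [Finset.mem_biUnion] at this
    obtain ⟨s, _, hs⟩ := this
    exact hbound s m hs
  have hspan := SpanAux.span_le_of_bnd h hsupp
  rw [hUB, hLB] at hspan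
  omega
end

section
/- For every oriented linear chord diagram C of d chords, Γ_{s_A} + Γ_{s_B} ≤ d + 2, where s_A (resp. s_B) denotes the state of C sending every chord to A (resp. to B). -/
open Equiv LaurentPolynomial Finset

namespace OLCDAux
open Relation

def rel (P : Set (ℤ × ℤ)) (u v : ℤ) : Prop := (u, v) ∈ P ∨ (v, u) ∈ P

lemma rel_symm (P : Set (ℤ × ℤ)) : Symmetric (rel P) := fun _ _ h => h.elim Or.inr Or.inl

def comp (P : Set (ℤ × ℤ)) (x : ℤ) : Set ℤ := {y | ReflTransGen (rel P) x y}

lemma mem_comp_self (P : Set (ℤ × ℤ)) (x : ℤ) : x ∈ comp P x := ReflTransGen.refl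

lemma comp_symm {P : Set (ℤ × ℤ)} {x y : ℤ} (h : y ∈ comp P x) : x ∈ comp P y :=
  (@ReflTransGen.symmetric _ _ ⟨rel_symm P⟩).symm _ _ h

lemma comp_eq_of_mem {P : Set (ℤ × ℤ)} {x y : ℤ} (h : y ∈ comp P x) : comp P y = comp P x := by
  ext z
  constructor
  · intro hz
    exact ReflTransGen.trans (h : ReflTransGen (rel P) x y) hz
  · intro hz
    exact ReflTransGen.trans (comp_symm h : ReflTransGen (rel P) y x) hz

lemma comp_mono {P Q : Set (ℤ × ℤ)} (h : ∀ u v, rel P u v → rel Q u v) (x : ℤ) :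
    comp P x ⊆ comp Q x := fun _ hz => ReflTransGen.mono h _ _ hz

lemma rel_mono_subset {P Q : Set (ℤ × ℤ)} (h : P ⊆ Q) : ∀ u v, rel P u v → rel Q u v :=
  fun _ _ hr => hr.elim (fun h1 => Or.inl (h h1)) (fun h1 => Or.inr (h h1))

lemma comp_congr {P Q : Set (ℤ × ℤ)} (h : ∀ u v, rel P u v ↔ rel Q u v) :
    comp P = comp Q := by
  funext x
  exact Set.Subset.antisymm (comp_mono (fun u v => (h u v).1) x)
    (comp_mono (fun u v => (h u v).2) x)

def isol (q : ℤ) (P : Set (ℤ × ℤ)) : Prop := ∀ pr ∈ P, pr.1 ≠ q ∧ pr.2 ≠ q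

lemma comp_isol {q : ℤ} {P : Set (ℤ × ℤ)} (h : isol q P) : comp P q = {q} := by
  ext y
  simp only [Set.mem_singleton_iff]
  constructor
  · intro hy
    induction hy with
    | refl => rfl
    | tail _ hstep ih =>
      subst ih
      rcases hstep with h1 | h1
      · exact absurd rfl (h _ h1).1
      · exact absurd rfl (h _ h1).2
  · rintro rfl; exact mem_comp_self P _

/-- Key path-analysis lemma: a path in `insert (a,b) P` either was already a path in `P`,
or both ends are `P`-connected to `a` or `b`. -/
lemma CL {P : Set (ℤ × ℤ)} {a b x y : ℤ}
    (h : ReflTransGen (rel (insert (a, b) P)) x y) :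
    ReflTransGen (rel P) x y ∨
      ((ReflTransGen (rel P) x a ∨ ReflTransGen (rel P) x b) ∧
       (ReflTransGen (rel P) y a ∨ ReflTransGen (rel P) y b)) := by
  induction h with
  | refl => exact Or.inl ReflTransGen.refl
  | @tail m c _ hstep ih =>
    have hcases : rel P m c ∨ ((m = a ∧ c = b) ∨ (m = b ∧ c = a)) := by
      rcases hstep with h1 | h1
      · rcases Set.mem_insert_iff.1 h1 with h2 | h2
        · right; left; exact ⟨congrArg Prod.fst h2, congrArg Prod.snd h2⟩
        · left; exact Or.inl h2
      · rcases Set.mem_insert_iff.1 h1 with h2 | h2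
        · right; right; exact ⟨congrArg Prod.snd h2, congrArg Prod.fst h2⟩
        · left; exact Or.inr h2
    rcases hcases with hP | hab
    · rcases ih with h1 | ⟨hx, hm⟩
      · exact Or.inl (h1.tail hP)
      · refine Or.inr ⟨hx, ?_⟩
        have hcm : ReflTransGen (rel P) c m := ReflTransGen.single (rel_symm P hP)
        rcases hm with h2 | h2
        · exact Or.inl (hcm.trans h2)
        · exact Or.inr (hcm.trans h2)
    · rcases hab with ⟨rfl, rfl⟩ | ⟨rfl, rfl⟩
      · refine Or.inr ⟨?_, Or.inr ReflTransGen.refl⟩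
        rcases ih with h1 | ⟨hx, _⟩
        · exact Or.inl h1
        · exact hx
      · refine Or.inr ⟨?_, Or.inl ReflTransGen.refl⟩
        rcases ih with h1 | ⟨hx, _⟩
        · exact Or.inr h1
        · exact hx


noncomputable def cnt (D : Set ℤ) (P : Set (ℤ × ℤ)) : ℕ := ((comp P) '' D).ncard

def Fm (Q : Set (ℤ × ℤ)) : Set ℤ → Set ℤ := fun A => ⋃ x ∈ A, comp Q x

lemma Fm_comp {P Q : Set (ℤ × ℤ)} (hPQ : ∀ u v, rel P u v → rel Q u v) (x : ℤ) :
    Fm Q (comp P x) = comp Q x := by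
  ext z
  simp only [Fm, Set.mem_iUnion, exists_prop]
  constructor
  · rintro ⟨y, hy, hz⟩
    have : y ∈ comp Q x := comp_mono hPQ x hy
    exact (comp_eq_of_mem this) ▸ hz
  · intro hz
    exact ⟨x, mem_comp_self P x, hz⟩

lemma image_Fm {D : Set ℤ} {P Q : Set (ℤ × ℤ)} (hPQ : ∀ u v, rel P u v → rel Q u v) :
    comp Q '' D = Fm Q '' (comp P '' D) := by
  rw [← Set.image_comp]
  apply Set.image_congr
  intro x _
  exact (Fm_comp hPQ x).symm

lemma cnt_congr {D : Set ℤ} {P Q : Set (ℤ × ℤ)} (h : ∀ u v, rel P u v ↔ rel Q u v) :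
    cnt D P = cnt D Q := by
  unfold cnt
  rw [comp_congr h]

/-- C1: adding edges can only decrease the number of components. -/
lemma cnt_mono {D : Set ℤ} (hD : D.Finite) {P Q : Set (ℤ × ℤ)}
    (hPQ : ∀ u v, rel P u v → rel Q u v) : cnt D Q ≤ cnt D P := by
  unfold cnt
  rw [image_Fm (P := P) hPQ]
  exact Set.ncard_image_le (hD.image _)

/-- C0: adding an edge between already-connected endpoints does not change components. -/
lemma comp_insert_of_rel {P : Set (ℤ × ℤ)} {a b : ℤ} (hab : ReflTransGen (rel P) a b) :
    comp (insert (a, b) P) = comp P := by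
  funext x
  apply Set.Subset.antisymm
  · intro y hy
    rcases CL hy with h1 | ⟨hx, hyy⟩
    · exact h1
    · have hsymm := fun {a b} (h : ReflTransGen (rel P) a b) => (@ReflTransGen.symmetric _ _ ⟨rel_symm P⟩).symm _ _ h
      have hxa : ReflTransGen (rel P) x a := by
        rcases hx with h2 | h2
        · exact h2
        · exact h2.trans (hsymm hab)
      have hay : ReflTransGen (rel P) a y := by
        rcases hyy with h2 | h2
        · exact hsymm h2
        · exact hab.trans (hsymm h2)
      exact hxa.trans hay
  · exact comp_mono (rel_mono_subset (Set.subset_insert _ _)) x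

lemma cnt_insert_of_rel {D : Set ℤ} {P : Set (ℤ × ℤ)} {a b : ℤ}
    (hab : ReflTransGen (rel P) a b) : cnt D (insert (a, b) P) = cnt D P := by
  unfold cnt
  rw [comp_insert_of_rel hab]

/-- C2: adding one edge decreases the number of components by at most 1. -/
lemma cnt_insert_ge {D : Set ℤ} (hD : D.Finite) (P : Set (ℤ × ℤ)) (a b : ℤ) :
    cnt D P ≤ cnt D (insert (a, b) P) + 1 := by
  classical
  set Q := insert (a, b) P with hQ
  have hPQ : ∀ u v, rel P u v → rel Q u v := rel_mono_subset (Set.subset_insert _ _)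
  set s := comp P '' D with hs
  have hsfin : s.Finite := hD.image _
  have hinj : Set.InjOn (Fm Q) (s \ {comp P a}) := by
    rintro A ⟨⟨x, hxD, rfl⟩, hA⟩ B ⟨⟨y, hyD, rfl⟩, hB⟩ hFAB
    rw [Fm_comp hPQ, Fm_comp hPQ] at hFAB
    have hy : y ∈ comp Q x := hFAB ▸ mem_comp_self Q y
    rcases CL hy with h1 | ⟨hx1, hy1⟩
    · exact (comp_eq_of_mem h1).symm
    · simp only [Set.mem_singleton_iff] at hA hB
      have hxb : ReflTransGen (rel P) x b := by
        rcases hx1 with h2 | h2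
        · exact absurd (comp_eq_of_mem (h2 : a ∈ comp P x)).symm hA
        · exact h2
      have hyb : ReflTransGen (rel P) y b := by
        rcases hy1 with h2 | h2
        · exact absurd (comp_eq_of_mem (h2 : a ∈ comp P y)).symm hB
        · exact h2
      rw [← comp_eq_of_mem (hxb : b ∈ comp P x), ← comp_eq_of_mem (hyb : b ∈ comp P y)]
  have h1 : cnt D P ≤ (s \ {comp P a}).ncard + 1 := by
    by_cases hmem : comp P a ∈ s
    · rw [Set.ncard_diff_singleton_add_one hmem hsfin]; exact le_rfl
    · rw [Set.diff_singleton_eq_self hmem]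
      exact Nat.le_succ _
  have h2 : (s \ {comp P a}).ncard = (Fm Q '' (s \ {comp P a})).ncard :=
    (Set.ncard_image_of_injOn hinj).symm
  have h3 : (Fm Q '' (s \ {comp P a})).ncard ≤ cnt D Q := by
    have him : Fm Q '' (s \ {comp P a}) ⊆ Fm Q '' s := Set.image_mono Set.diff_subset
    have heq : comp Q '' D = Fm Q '' s := image_Fm hPQ
    rw [cnt, heq]
    exact Set.ncard_le_ncard him (hsfin.image _)
  omega

/-- C3: adding an edge between two disconnected vertices of `D` decreases the count. -/
lemma cnt_insert_lt {D : Set ℤ} (hD : D.Finite) {P : Set (ℤ × ℤ)} {a b : ℤ}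
    (haD : a ∈ D) (hbD : b ∈ D) (hab : ¬ ReflTransGen (rel P) a b) :
    cnt D (insert (a, b) P) + 1 ≤ cnt D P := by
  classical
  set Q := insert (a, b) P with hQ
  have hPQ : ∀ u v, rel P u v → rel Q u v := rel_mono_subset (Set.subset_insert _ _)
  set s := comp P '' D with hs
  have hsfin : s.Finite := hD.image _
  have hne : comp P a ≠ comp P b := by
    intro h
    exact hab (h ▸ mem_comp_self P b : b ∈ comp P a)
  have habQ : b ∈ comp Q a := ReflTransGen.single (Or.inl (Set.mem_insert _ _))
  have hFab : Fm Q (comp P a) = Fm Q (comp P b) := by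
    rw [Fm_comp hPQ, Fm_comp hPQ, comp_eq_of_mem habQ]
  have himg : comp Q '' D = Fm Q '' (s \ {comp P b}) := by
    rw [image_Fm (P := P) hPQ]
    apply Set.Subset.antisymm
    · rintro _ ⟨A, hA, rfl⟩
      by_cases hAb : A = comp P b
      · subst hAb
        refine ⟨comp P a, ⟨⟨a, haD, rfl⟩, ?_⟩, hFab⟩
        simpa using hne
      · exact ⟨A, ⟨hA, by simpa using hAb⟩, rfl⟩
    · exact Set.image_mono Set.diff_subset
  have hbmem : comp P b ∈ s := ⟨b, hbD, rfl⟩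
  calc cnt D Q + 1 = (Fm Q '' (s \ {comp P b})).ncard + 1 := by rw [cnt, himg]
    _ ≤ (s \ {comp P b}).ncard + 1 :=
        Nat.add_le_add_right (Set.ncard_image_le hsfin.diff) 1
    _ = s.ncard := Set.ncard_diff_singleton_add_one hbmem hsfin
    _ = cnt D P := rfl


lemma step_lemma {D : Set ℤ} (hD : D.Finite) {p q : ℤ} (hpq : p < q)
    {P1 P2 : Set (ℤ × ℤ)} (h1 : isol q P1) (h2 : isol q P2)
    (hpD : p ∈ D) (hp1D : p - 1 ∈ D) (hqD : q ∈ D) (hq1D : q - 1 ∈ D) :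
    cnt D (insert (p, q-1) (insert (p-1, q) P1)) +
      cnt D (insert (p-1, q-1) (insert (p, q) P2)) + cnt D (P1 ∪ P2) + 1 ≤
    cnt D P1 + cnt D P2 +
      cnt D (insert (p-1, q) (insert (p, q) (insert (p-1, q-1) (insert (p, q-1) (P1 ∪ P2))))) := by
  have hsymm1 := fun {a b} (h : ReflTransGen (rel P1) a b) => (@ReflTransGen.symmetric _ _ ⟨rel_symm P1⟩).symm _ _ h
  have hsymm2 := fun {a b} (h : ReflTransGen (rel P2) a b) => (@ReflTransGen.symmetric _ _ ⟨rel_symm P2⟩).symm _ _ h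
  have hc1 : comp P1 q = {q} := comp_isol h1
  have hc2 : comp P2 q = {q} := comp_isol h2
  -- basic non-connectivity facts across the isolated point q
  have hnot1 : ∀ x : ℤ, x ≠ q → ¬ ReflTransGen (rel P1) x q := by
    intro x hx h
    have : x ∈ comp P1 q := hsymm1 h
    rw [hc1] at this
    exact hx this
  have hnot2 : ∀ x : ℤ, x ≠ q → ¬ ReflTransGen (rel P2) x q := by
    intro x hx h
    have : x ∈ comp P2 q := hsymm2 h
    rw [hc2] at this
    exact hx this
  set U : Set (ℤ × ℤ) := P1 ∪ P2 with hU
  have relm1 : ∀ u v, rel P1 u v → rel U u v := rel_mono_subset Set.subset_union_left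
  have relm2 : ∀ u v, rel P2 u v → rel U u v := rel_mono_subset Set.subset_union_right
  -- forced drops from the edge at q
  have hA1 : cnt D (insert (p-1, q) P1) + 1 ≤ cnt D P1 :=
    cnt_insert_lt hD hp1D hqD (hnot1 (p-1) (by omega))
  have hB1 : cnt D (insert (p, q) P2) + 1 ≤ cnt D P2 :=
    cnt_insert_lt hD hpD hqD (hnot2 p (by omega))
  -- the α-dichotomy
  obtain ⟨α, hA2, hU3⟩ : ∃ α : ℕ,
      cnt D (insert (p, q-1) (insert (p-1, q) P1)) + α ≤ cnt D (insert (p-1, q) P1) ∧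
      cnt D U ≤ cnt D (insert (p, q-1) U) + α := by
    by_cases hα : ReflTransGen (rel P1) p (q-1)
    · refine ⟨0, ?_, ?_⟩
      · rw [cnt_insert_of_rel (ReflTransGen.mono
          (rel_mono_subset (Set.subset_insert _ _)) _ _ hα)]
        omega
      · rw [cnt_insert_of_rel (ReflTransGen.mono relm1 _ _ hα)]
        omega
    · refine ⟨1, ?_, ?_⟩
      · have hα' : ¬ ReflTransGen (rel (insert (p-1, q) P1)) p (q-1) := by
          intro h
          rcases CL h with hP | ⟨hx, hy⟩
          · exact hα hP
          · have hxa : ReflTransGen (rel P1) p (p-1) := by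
              rcases hx with h2 | h2
              · exact h2
              · exact absurd h2 (hnot1 p (by omega))
            have hya : ReflTransGen (rel P1) (q-1) (p-1) := by
              rcases hy with h2 | h2
              · exact h2
              · exact absurd h2 (hnot1 (q-1) (by omega))
            exact hα (hxa.trans (hsymm1 hya))
        exact cnt_insert_lt hD hpD hq1D hα'
      · exact cnt_insert_ge hD U p (q-1)
  -- the β-dichotomy
  obtain ⟨β, hB2, hU4⟩ : ∃ β : ℕ,
      cnt D (insert (p-1, q-1) (insert (p, q) P2)) + β ≤ cnt D (insert (p, q) P2) ∧
      cnt D (insert (p, q-1) U) ≤ cnt D (insert (p-1, q-1) (insert (p, q-1) U)) + β := by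
    by_cases hβ : ReflTransGen (rel P2) (p-1) (q-1)
    · refine ⟨0, ?_, ?_⟩
      · rw [cnt_insert_of_rel (ReflTransGen.mono
          (rel_mono_subset (Set.subset_insert _ _)) _ _ hβ)]
        omega
      · rw [cnt_insert_of_rel (ReflTransGen.mono
          (fun u v h => rel_mono_subset (Set.subset_insert _ _) u v (relm2 u v h)) _ _ hβ)]
        omega
    · refine ⟨1, ?_, ?_⟩
      · have hβ' : ¬ ReflTransGen (rel (insert (p, q) P2)) (p-1) (q-1) := by
          intro h
          rcases CL h with hP | ⟨hx, hy⟩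
          · exact hβ hP
          · have hxa : ReflTransGen (rel P2) (p-1) p := by
              rcases hx with h2 | h2
              · exact h2
              · exact absurd h2 (hnot2 (p-1) (by omega))
            have hya : ReflTransGen (rel P2) (q-1) p := by
              rcases hy with h2 | h2
              · exact h2
              · exact absurd h2 (hnot2 (q-1) (by omega))
            exact hβ (hxa.trans (hsymm2 hya))
        exact cnt_insert_lt hD hp1D hq1D hβ'
      · exact cnt_insert_ge hD _ (p-1) (q-1)
  -- remaining union steps
  have hU1 : cnt D (insert (p-1, q-1) (insert (p, q-1) U)) ≤
      cnt D (insert (p, q) (insert (p-1, q-1) (insert (p, q-1) U))) + 1 :=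
    cnt_insert_ge hD _ p q
  have hU2 : cnt D (insert (p-1, q) (insert (p, q) (insert (p-1, q-1) (insert (p, q-1) U)))) =
      cnt D (insert (p, q) (insert (p-1, q-1) (insert (p, q-1) U))) := by
    apply cnt_insert_of_rel
    set S : Set (ℤ × ℤ) := insert (p, q) (insert (p-1, q-1) (insert (p, q-1) U)) with hS
    have s1 : rel S (p-1) (q-1) := Or.inl (by simp [hS])
    have s2 : rel S (q-1) p := Or.inr (by simp [hS])
    have s3 : rel S p q := Or.inl (by simp [hS])
    exact ReflTransGen.tail (ReflTransGen.tail (ReflTransGen.single s1) s2) s3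
  omega


def pairSet (lbl : Bool) (c : ℤ × ℤ) : Set (ℤ × ℤ) :=
  if lbl = decide (c.1 < c.2) then {(c.1, c.2 - 1), (c.1 - 1, c.2)}
  else {(c.1, c.2), (c.1 - 1, c.2 - 1)}

def PP (lbl : Bool) (C : Finset (ℤ × ℤ)) : Set (ℤ × ℤ) :=
  ⋃ c ∈ (C : Set (ℤ × ℤ)), pairSet lbl c

def Good (N : ℕ) (C : Finset (ℤ × ℤ)) : Prop :=
  (∀ c ∈ C, c.1 ≠ c.2 ∧ 1 ≤ c.1 ∧ c.1 ≤ N ∧ 1 ≤ c.2 ∧ c.2 ≤ N) ∧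
  (∀ c ∈ C, ∀ c' ∈ C, c ≠ c' → c.1 ≠ c'.1 ∧ c.1 ≠ c'.2 ∧ c.2 ≠ c'.1 ∧ c.2 ≠ c'.2)

lemma pairSet_entries {lbl : Bool} {c : ℤ × ℤ} {pr : ℤ × ℤ} (h : pr ∈ pairSet lbl c) :
    (pr.1 = c.1 ∨ pr.1 = c.1 - 1) ∧ (pr.2 = c.2 ∨ pr.2 = c.2 - 1) := by
  unfold pairSet at h
  split at h <;> rcases h with h | h <;> subst h <;> simp

lemma rel_insert_iff {a b : ℤ} {P : Set (ℤ × ℤ)} {u v : ℤ} :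
    rel (insert (a, b) P) u v ↔ ((u = a ∧ v = b) ∨ (u = b ∧ v = a)) ∨ rel P u v := by
  unfold rel
  simp only [Set.mem_insert_iff, Prod.mk.injEq]
  tauto

lemma rel_pair_union {a b c d : ℤ} {X : Set (ℤ × ℤ)} {u v : ℤ} :
    rel (({(a, b), (c, d)} : Set (ℤ × ℤ)) ∪ X) u v ↔
    ((u = a ∧ v = b) ∨ (u = b ∧ v = a)) ∨ ((u = c ∧ v = d) ∨ (u = d ∧ v = c)) ∨ rel X u v := by
  unfold rel
  simp only [Set.mem_union, Set.mem_insert_iff, Set.mem_singleton_iff, Prod.mk.injEq]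
  tauto


lemma pair_union {γ : Type*} (a b : γ) (s : Set γ) :
    ({a, b} : Set γ) ∪ s = insert a (insert b s) := by
  rw [Set.insert_union, Set.singleton_union]

lemma cnt_flip1 {D : Set ℤ} (a1 a2 : ℤ) (s : Set (ℤ × ℤ)) :
    cnt D (insert (a1, a2) s) = cnt D (insert (a2, a1) s) := by
  apply cnt_congr
  intro u v
  simp only [rel_insert_iff]
  tauto

lemma rot4 {γ : Type*} (a b c d : γ) (s : Set γ) :
    insert a (insert b (insert c (insert d s))) =
    insert b (insert c (insert d (insert a s))) := by
  rw [Set.insert_comm a b, Set.insert_comm a c, Set.insert_comm a d]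

lemma cnt_flip2 {D : Set ℤ} (a1 a2 b1 b2 : ℤ) (s : Set (ℤ × ℤ)) :
    cnt D (insert (a1, a2) (insert (b1, b2) s)) =
    cnt D (insert (a2, a1) (insert (b2, b1) s)) := by
  calc cnt D (insert (a1, a2) (insert (b1, b2) s))
      = cnt D (insert (a2, a1) (insert (b1, b2) s)) := cnt_flip1 a1 a2 _
    _ = cnt D (insert (b1, b2) (insert (a2, a1) s)) := by rw [Set.insert_comm]
    _ = cnt D (insert (b2, b1) (insert (a2, a1) s)) := cnt_flip1 b1 b2 _
    _ = cnt D (insert (a2, a1) (insert (b2, b1) s)) := by rw [Set.insert_comm]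

lemma cnt_flip4 {D : Set ℤ} (a1 a2 b1 b2 c1 c2 d1 d2 : ℤ) (s : Set (ℤ × ℤ)) :
    cnt D (insert (a1, a2) (insert (b1, b2) (insert (c1, c2) (insert (d1, d2) s)))) =
    cnt D (insert (a2, a1) (insert (b2, b1) (insert (c2, c1) (insert (d2, d1) s)))) := by
  calc cnt D (insert (a1, a2) (insert (b1, b2) (insert (c1, c2) (insert (d1, d2) s))))
      = cnt D (insert (a2, a1) (insert (b1, b2) (insert (c1, c2) (insert (d1, d2) s)))) :=
        cnt_flip1 a1 a2 _
    _ = cnt D (insert (b1, b2) (insert (c1, c2) (insert (d1, d2) (insert (a2, a1) s)))) := by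
        rw [rot4]
    _ = cnt D (insert (b2, b1) (insert (c1, c2) (insert (d1, d2) (insert (a2, a1) s)))) :=
        cnt_flip1 b1 b2 _
    _ = cnt D (insert (c1, c2) (insert (d1, d2) (insert (a2, a1) (insert (b2, b1) s)))) := by
        rw [rot4]
    _ = cnt D (insert (c2, c1) (insert (d1, d2) (insert (a2, a1) (insert (b2, b1) s)))) :=
        cnt_flip1 c1 c2 _
    _ = cnt D (insert (d1, d2) (insert (a2, a1) (insert (b2, b1) (insert (c2, c1) s)))) := by
        rw [rot4]
    _ = cnt D (insert (d2, d1) (insert (a2, a1) (insert (b2, b1) (insert (c2, c1) s)))) :=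
        cnt_flip1 d1 d2 _
    _ = cnt D (insert (a2, a1) (insert (b2, b1) (insert (c2, c1) (insert (d2, d1) s)))) := by
        rw [rot4]

lemma icc_ncard (N : ℕ) : (Set.Icc (0:ℤ) N).ncard = N + 1 := by
  rw [← Finset.coe_Icc, Set.ncard_coe_finset, Int.card_Icc]
  omega

set_option maxHeartbeats 1000000 in
lemma main_ind (N : ℕ) : ∀ (n : ℕ) (C : Finset (ℤ × ℤ)), C.card = n → Good N C →
    cnt (Set.Icc (0:ℤ) N) (PP true C) + cnt (Set.Icc (0:ℤ) N) (PP false C) + n ≤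
    cnt (Set.Icc (0:ℤ) N) (PP true C ∪ PP false C) + (N + 1) := by
  intro n
  induction n with
  | zero =>
    intro C hcard _
    rw [Finset.card_eq_zero] at hcard
    subst hcard
    have hPP : ∀ lbl, PP lbl (∅ : Finset (ℤ × ℤ)) = ∅ := by
      intro lbl; simp [PP]
    rw [hPP true, hPP false, Set.empty_union]
    have hle : cnt (Set.Icc (0:ℤ) N) ∅ ≤ N + 1 := by
      calc cnt (Set.Icc (0:ℤ) N) ∅ ≤ (Set.Icc (0:ℤ) N).ncard :=
            Set.ncard_image_le (Set.finite_Icc _ _)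
        _ = N + 1 := icc_ncard N
    omega
  | succ n IH =>
    intro C hcard hG
    have hD : (Set.Icc (0:ℤ) N).Finite := Set.finite_Icc _ _
    have hne : C.Nonempty := Finset.card_pos.mp (by omega)
    set E : Finset ℤ := C.image Prod.fst ∪ C.image Prod.snd with hE
    have hEne : E.Nonempty := by
      obtain ⟨c, hc⟩ := hne
      exact ⟨c.1, Finset.mem_union.2 (Or.inl (Finset.mem_image.2 ⟨c, hc, rfl⟩))⟩
    set q : ℤ := E.max' hEne with hqdef
    have hqE : q ∈ E := E.max'_mem hEne
    have hmax : ∀ x ∈ E, x ≤ q := fun x hx => E.le_max' x hx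
    have hmax1 : ∀ c ∈ C, c.1 ≤ q := by
      intro c hc
      exact hmax c.1 (Finset.mem_union.2 (Or.inl (Finset.mem_image.2 ⟨c, hc, rfl⟩)))
    have hmax2 : ∀ c ∈ C, c.2 ≤ q := by
      intro c hc
      exact hmax c.2 (Finset.mem_union.2 (Or.inr (Finset.mem_image.2 ⟨c, hc, rfl⟩)))
    obtain ⟨c₀, hc₀, hq⟩ : ∃ c ∈ C, c.1 = q ∨ c.2 = q := by
      rw [hE] at hqE
      rcases Finset.mem_union.1 hqE with h | h <;>
        · obtain ⟨c, hc, hcq⟩ := Finset.mem_image.1 h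
          exact ⟨c, hc, by tauto⟩
    set C' := C.erase c₀ with hC'
    have hcard' : C'.card = n := by
      rw [hC', Finset.card_erase_of_mem hc₀, hcard]
      omega
    have hG' : Good N C' :=
      ⟨fun c hc => hG.1 c (Finset.mem_of_mem_erase hc),
       fun c hc c' hc' => hG.2 c (Finset.mem_of_mem_erase hc) c' (Finset.mem_of_mem_erase hc')⟩
    have hCi : C = insert c₀ C' := (Finset.insert_erase hc₀).symm
    have hdecomp : ∀ lbl, PP lbl C = pairSet lbl c₀ ∪ PP lbl C' := by
      intro lbl
      rw [PP, hCi, Finset.coe_insert, Set.biUnion_insert]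
      rfl
    have hlt' : ∀ c ∈ C', c.1 < q ∧ c.2 < q := by
      intro c hc
      have hcC : c ∈ C := Finset.mem_of_mem_erase hc
      have hne' : c ≠ c₀ := Finset.ne_of_mem_erase hc
      have h2 := hG.2 c hcC c₀ hc₀ hne'
      constructor
      · rcases hq with h | h
        · exact lt_of_le_of_ne (hmax1 c hcC) (h ▸ h2.1)
        · exact lt_of_le_of_ne (hmax1 c hcC) (h ▸ h2.2.1)
      · rcases hq with h | h
        · exact lt_of_le_of_ne (hmax2 c hcC) (h ▸ h2.2.2.1)
        · exact lt_of_le_of_ne (hmax2 c hcC) (h ▸ h2.2.2.2)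
    have hisol : ∀ lbl, isol q (PP lbl C') := by
      intro lbl pr hpr
      obtain ⟨c, hc, hmem⟩ := Set.mem_iUnion₂.1 hpr
      have hcC' : c ∈ C' := hc
      have hlt := hlt' c hcC'
      have hent := pairSet_entries hmem
      constructor
      · rcases hent.1 with h | h <;> omega
      · rcases hent.2 with h | h <;> omega
    have IH' := IH C' hcard' hG'
    -- case on the orientation of the maximal chord
    rcases hq with hq1 | hq2
    · -- negative chord: c₀ = (q, p) with p < q
      set p : ℤ := c₀.2 with hpdef
      have hGc := hG.1 c₀ hc₀
      have hplt : p < q := lt_of_le_of_ne (hq1 ▸ hmax2 c₀ hc₀) (fun h => hGc.1 (hq1.trans h.symm))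
      have hneg : ¬ (c₀.1 < c₀.2) := by omega
      have hpairT : pairSet true c₀ = {(q, p), (q - 1, p - 1)} := by
        rw [pairSet, if_neg (by simp [hneg]), hq1]
      have hpairF : pairSet false c₀ = {(q, p - 1), (q - 1, p)} := by
        rw [pairSet, if_pos (by simp [hneg]), hq1]
      -- memberships in D
      have hpD : p ∈ Set.Icc (0:ℤ) N := by simp [Set.mem_Icc]; omega
      have hp1D : p - 1 ∈ Set.Icc (0:ℤ) N := by simp [Set.mem_Icc]; omega
      have hqD : q ∈ Set.Icc (0:ℤ) N := by
        simp [Set.mem_Icc]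
        constructor
        · omega
        · rw [← hq1]; exact hGc.2.2.1
      have hq1D : q - 1 ∈ Set.Icc (0:ℤ) N := by
        simp [Set.mem_Icc] at hqD ⊢; omega
      have hstep := step_lemma hD hplt (hisol false) (hisol true) hpD hp1D hqD hq1D
      -- identify the counts
      have eqA : cnt (Set.Icc (0:ℤ) N) (PP false C) =
          cnt (Set.Icc (0:ℤ) N) (insert (p, q-1) (insert (p-1, q) (PP false C'))) := by
        rw [hdecomp false, hpairF, pair_union, cnt_flip2, Set.insert_comm]
      have eqB : cnt (Set.Icc (0:ℤ) N) (PP true C) =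
          cnt (Set.Icc (0:ℤ) N) (insert (p-1, q-1) (insert (p, q) (PP true C'))) := by
        rw [hdecomp true, hpairT, pair_union, cnt_flip2, Set.insert_comm]
      have hsetU : PP true C ∪ PP false C =
          insert (q, p-1) (insert (q, p) (insert (q-1, p-1)
            (insert (q-1, p) (PP false C' ∪ PP true C')))) := by
        rw [hdecomp true, hdecomp false, hpairT, hpairF]
        ext pr
        simp only [Set.mem_union, Set.mem_insert_iff, Set.mem_singleton_iff]
        tauto
      have eqU : cnt (Set.Icc (0:ℤ) N) (PP true C ∪ PP false C) =
          cnt (Set.Icc (0:ℤ) N) (insert (p-1, q) (insert (p, q) (insert (p-1, q-1)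
            (insert (p, q-1) (PP false C' ∪ PP true C'))))) := by
        rw [hsetU, cnt_flip4]
      have eqU' : cnt (Set.Icc (0:ℤ) N) (PP true C' ∪ PP false C') =
          cnt (Set.Icc (0:ℤ) N) (PP false C' ∪ PP true C') := by
        rw [Set.union_comm]
      rw [eqA, eqB, eqU]
      rw [eqU'] at IH'
      omega
    · -- positive chord: c₀ = (p, q) with p < q
      set p : ℤ := c₀.1 with hpdef
      have hGc := hG.1 c₀ hc₀
      have hplt : p < q := lt_of_le_of_ne (hq2 ▸ hmax1 c₀ hc₀) (fun h => hGc.1 (h.trans hq2.symm))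
      have hpos : c₀.1 < c₀.2 := by omega
      have hpairT : pairSet true c₀ = {(p, q - 1), (p - 1, q)} := by
        rw [pairSet, if_pos (by simp [hpos]), hq2]
      have hpairF : pairSet false c₀ = {(p, q), (p - 1, q - 1)} := by
        rw [pairSet, if_neg (by simp [hpos]), hq2]
      have hpD : p ∈ Set.Icc (0:ℤ) N := by simp [Set.mem_Icc]; omega
      have hp1D : p - 1 ∈ Set.Icc (0:ℤ) N := by simp [Set.mem_Icc]; omega
      have hqD : q ∈ Set.Icc (0:ℤ) N := by
        simp [Set.mem_Icc]
        constructor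
        · omega
        · rw [← hq2]; exact hGc.2.2.2.2
      have hq1D : q - 1 ∈ Set.Icc (0:ℤ) N := by
        simp [Set.mem_Icc] at hqD ⊢; omega
      have hstep := step_lemma hD hplt (hisol true) (hisol false) hpD hp1D hqD hq1D
      have eqA : cnt (Set.Icc (0:ℤ) N) (PP true C) =
          cnt (Set.Icc (0:ℤ) N) (insert (p, q-1) (insert (p-1, q) (PP true C'))) := by
        rw [hdecomp true, hpairT, pair_union]
      have eqB : cnt (Set.Icc (0:ℤ) N) (PP false C) =
          cnt (Set.Icc (0:ℤ) N) (insert (p-1, q-1) (insert (p, q) (PP false C'))) := by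
        rw [hdecomp false, hpairF, pair_union, Set.insert_comm]
      have eqU : cnt (Set.Icc (0:ℤ) N) (PP true C ∪ PP false C) =
          cnt (Set.Icc (0:ℤ) N) (insert (p-1, q) (insert (p, q) (insert (p-1, q-1)
            (insert (p, q-1) (PP true C' ∪ PP false C'))))) := by
        rw [hdecomp true, hdecomp false, hpairT, hpairF]
        congr 1
        ext pr
        simp only [Set.mem_union, Set.mem_insert_iff, Set.mem_singleton_iff]
        tauto
      rw [eqA, eqB, eqU]
      omega


lemma orbit_eq_comp (P : Set (ℤ × ℤ)) (x : ℤ) :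
    MulAction.orbit (Subgroup.closure ((fun pr : ℤ × ℤ => Equiv.swap pr.1 pr.2) '' P)) x
      = comp P x := by
  set S : Set (Equiv.Perm ℤ) := (fun pr : ℤ × ℤ => Equiv.swap pr.1 pr.2) '' P with hS
  apply Set.Subset.antisymm
  · rintro y ⟨⟨g, hg⟩, rfl⟩
    have key : ∀ g ∈ Subgroup.closure S, ∀ z : ℤ, ReflTransGen (rel P) z (g z) := by
      intro g hg
      induction hg using Subgroup.closure_induction with
      | mem σ hσ =>
        obtain ⟨pr, hpr, rfl⟩ := hσ
        intro z
        rcases eq_or_ne z pr.1 with rfl | h1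
        · rw [Equiv.swap_apply_left]
          exact ReflTransGen.single (Or.inl (by simpa using hpr))
        rcases eq_or_ne z pr.2 with rfl | h2
        · rw [Equiv.swap_apply_right]
          exact ReflTransGen.single (Or.inr (by simpa using hpr))
        · rw [Equiv.swap_apply_of_ne_of_ne h1 h2]
      | one => intro z; rw [Equiv.Perm.one_apply]
      | mul g h _ _ ihg ihh =>
        intro z
        simp only [Equiv.Perm.mul_apply]
        exact (ihh z).trans (ihg (h z))
      | inv g _ ihg =>
        intro z
        have h1 := ihg (g⁻¹ z)
        rw [show g (g⁻¹ z) = z from (Equiv.eq_symm_apply g).mp rfl] at h1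
        exact (@ReflTransGen.symmetric _ _ ⟨rel_symm P⟩).symm _ _ h1
    exact key g hg x
  · intro y hy
    induction hy with
    | refl => exact MulAction.mem_orbit_self x
    | @tail b c _ hstep ih =>
      have hσ : Equiv.swap b c ∈ Subgroup.closure S := by
        apply Subgroup.subset_closure
        rcases hstep with h | h
        · exact ⟨(b, c), h, rfl⟩
        · exact ⟨(c, b), h, Equiv.swap_comm c b⟩
      obtain ⟨g, hg⟩ := ih
      refine ⟨(⟨Equiv.swap b c, hσ⟩ : Subgroup.closure S) * g, ?_⟩
      have : (g : Equiv.Perm ℤ) • x = b := hg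
      show (Equiv.swap b c * (g : Equiv.Perm ℤ)) • x = c
      rw [mul_smul, this]
      show Equiv.swap b c b = c
      exact Equiv.swap_apply_left b c

end OLCDAux

lemma Rset_eq (lbl : Bool) (c : ℤ × ℤ) :
    Rset lbl c = (fun pr : ℤ × ℤ => Equiv.swap pr.1 pr.2) '' OLCDAux.pairSet lbl c := by
  unfold Rset OLCDAux.pairSet
  split <;> rw [Set.image_insert_eq, Set.image_singleton]

lemma stateGroup_gen (C : Finset (ℤ × ℤ)) (lbl : Bool) :
    (⋃ c : {c // c ∈ C}, Rset lbl c.1) =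
    (fun pr : ℤ × ℤ => Equiv.swap pr.1 pr.2) '' OLCDAux.PP lbl C := by
  ext σ
  constructor
  · intro hσ
    obtain ⟨⟨c, hc⟩, hmem⟩ := Set.mem_iUnion.1 hσ
    rw [Rset_eq] at hmem
    obtain ⟨pr, hpr, rfl⟩ := hmem
    exact ⟨pr, Set.mem_iUnion₂.2 ⟨c, Finset.mem_coe.2 hc, hpr⟩, rfl⟩
  · rintro ⟨pr, hpr, rfl⟩
    obtain ⟨c, hc, hmem⟩ := Set.mem_iUnion₂.1 hpr
    exact Set.mem_iUnion.2 ⟨⟨c, Finset.mem_coe.1 hc⟩, (Rset_eq lbl c).symm ▸ ⟨pr, hmem, rfl⟩⟩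

lemma Gamma_eq_cnt (d : ℕ) (C : Finset (ℤ × ℤ)) (lbl : Bool) :
    Gamma d C (fun _ => lbl) =
    OLCDAux.cnt (Set.Icc (0:ℤ) (2 * (d:ℤ))) (OLCDAux.PP lbl C) := by
  unfold Gamma OLCDAux.cnt stateGroup
  congr 1
  apply Set.image_congr
  intro x _
  rw [show (⋃ c : {c // c ∈ C}, Rset ((fun _ => lbl) c) c.1) =
      (fun pr : ℤ × ℤ => Equiv.swap pr.1 pr.2) '' OLCDAux.PP lbl C from stateGroup_gen C lbl]
  exact OLCDAux.orbit_eq_comp (OLCDAux.PP lbl C) x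

lemma good_of_isOLCD {d : ℕ} {C : Finset (ℤ × ℤ)} (hC : IsOLCD d C) :
    OLCDAux.Good (2 * d) C := by
  classical
  obtain ⟨hcard, himg⟩ := hC
  set F1 := C.image Prod.fst with hF1
  set F2 := C.image Prod.snd with hF2
  have hcic : (Finset.Icc (1:ℤ) (2 * (d:ℤ))).card = 2 * d := by
    rw [Int.card_Icc]; omega
  have hUcard : (F1 ∪ F2).card = 2 * d := by rw [himg, hcic]
  have h1le : F1.card ≤ d := le_trans (Finset.card_image_le) (le_of_eq hcard)
  have h2le : F2.card ≤ d := le_trans (Finset.card_image_le) (le_of_eq hcard)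
  have hsum := Finset.card_union_add_card_inter F1 F2
  have hint0 : (F1 ∩ F2).card = 0 := by omega
  have h1card : F1.card = d := by omega
  have h2card : F2.card = d := by omega
  have hint : F1 ∩ F2 = ∅ := Finset.card_eq_zero.1 hint0
  have hinj1 : Set.InjOn Prod.fst (C : Set (ℤ × ℤ)) := Finset.card_image_iff.1 (by rw [← hF1, h1card, hcard])
  have hinj2 : Set.InjOn Prod.snd (C : Set (ℤ × ℤ)) := Finset.card_image_iff.1 (by rw [← hF2, h2card, hcard])
  have hmem1 : ∀ c ∈ C, c.1 ∈ Finset.Icc (1:ℤ) (2 * (d:ℤ)) := by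
    intro c hc
    rw [← himg]
    exact Finset.mem_union.2 (Or.inl (Finset.mem_image.2 ⟨c, hc, rfl⟩))
  have hmem2 : ∀ c ∈ C, c.2 ∈ Finset.Icc (1:ℤ) (2 * (d:ℤ)) := by
    intro c hc
    rw [← himg]
    exact Finset.mem_union.2 (Or.inr (Finset.mem_image.2 ⟨c, hc, rfl⟩))
  have hdisj : ∀ c ∈ C, ∀ c' ∈ C, c.1 ≠ c'.2 := by
    intro c hc c' hc' h
    have : c.1 ∈ F1 ∩ F2 := Finset.mem_inter.2
      ⟨Finset.mem_image.2 ⟨c, hc, rfl⟩, Finset.mem_image.2 ⟨c', hc', h.symm⟩⟩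
    rw [hint] at this
    exact absurd this (Finset.notMem_empty _)
  constructor
  · intro c hc
    have h1 := Finset.mem_Icc.1 (hmem1 c hc)
    have h2 := Finset.mem_Icc.1 (hmem2 c hc)
    refine ⟨hdisj c hc c hc, h1.1, ?_, h2.1, ?_⟩ <;> push_cast <;> omega
  · intro c hc c' hc' hne
    refine ⟨?_, hdisj c hc c' hc', fun h => hdisj c' hc' c hc h.symm, ?_⟩
    · exact fun h => hne (hinj1 (Finset.mem_coe.2 hc) (Finset.mem_coe.2 hc') h)
    · exact fun h => hne (hinj2 (Finset.mem_coe.2 hc) (Finset.mem_coe.2 hc') h)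

lemma four_edges {C : Finset (ℤ × ℤ)} {c : ℤ × ℤ} (hc : c ∈ C) :
    (c.1, c.2 - 1) ∈ OLCDAux.PP true C ∪ OLCDAux.PP false C ∧
    (c.1 - 1, c.2) ∈ OLCDAux.PP true C ∪ OLCDAux.PP false C ∧
    (c.1, c.2) ∈ OLCDAux.PP true C ∪ OLCDAux.PP false C ∧
    (c.1 - 1, c.2 - 1) ∈ OLCDAux.PP true C ∪ OLCDAux.PP false C := by
  have hsub : ∀ lbl, OLCDAux.pairSet lbl c ⊆ OLCDAux.PP lbl C := fun lbl =>
    Set.subset_biUnion_of_mem (Finset.mem_coe.2 hc)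
  have hT : OLCDAux.pairSet true c ⊆ OLCDAux.PP true C ∪ OLCDAux.PP false C :=
    (hsub true).trans Set.subset_union_left
  have hF : OLCDAux.pairSet false c ⊆ OLCDAux.PP true C ∪ OLCDAux.PP false C :=
    (hsub false).trans Set.subset_union_right
  by_cases h12 : c.1 < c.2
  · have e1 : OLCDAux.pairSet true c = {(c.1, c.2 - 1), (c.1 - 1, c.2)} := by
      rw [OLCDAux.pairSet, if_pos (by simp [h12])]
    have e2 : OLCDAux.pairSet false c = {(c.1, c.2), (c.1 - 1, c.2 - 1)} := by
      rw [OLCDAux.pairSet, if_neg (by simp [h12])]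
    exact ⟨hT (e1 ▸ Set.mem_insert _ _),
      hT (e1 ▸ Set.mem_insert_of_mem _ rfl),
      hF (e2 ▸ Set.mem_insert _ _),
      hF (e2 ▸ Set.mem_insert_of_mem _ rfl)⟩
  · have e1 : OLCDAux.pairSet true c = {(c.1, c.2), (c.1 - 1, c.2 - 1)} := by
      rw [OLCDAux.pairSet, if_neg (by simp [h12])]
    have e2 : OLCDAux.pairSet false c = {(c.1, c.2 - 1), (c.1 - 1, c.2)} := by
      rw [OLCDAux.pairSet, if_pos (by simp [h12])]
    exact ⟨hF (e2 ▸ Set.mem_insert _ _),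
      hF (e2 ▸ Set.mem_insert_of_mem _ rfl),
      hT (e1 ▸ Set.mem_insert _ _),
      hT (e1 ▸ Set.mem_insert_of_mem _ rfl)⟩

lemma conn {d : ℕ} {C : Finset (ℤ × ℤ)} (hC : IsOLCD d C) :
    ∀ k : ℕ, k ≤ 2 * d →
      Relation.ReflTransGen (OLCDAux.rel (OLCDAux.PP true C ∪ OLCDAux.PP false C)) 0 (k : ℤ) := by
  intro k
  induction k with
  | zero => intro _; exact Relation.ReflTransGen.refl
  | succ k IH =>
    intro hk
    have hIH := IH (by omega)
    have hmem : ((k:ℤ) + 1) ∈ C.image Prod.fst ∪ C.image Prod.snd := by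
      rw [hC.2, Finset.mem_Icc]
      omega
    have hstep : Relation.ReflTransGen
        (OLCDAux.rel (OLCDAux.PP true C ∪ OLCDAux.PP false C)) (k:ℤ) ((k:ℤ) + 1) := by
      rcases Finset.mem_union.1 hmem with h | h
      · obtain ⟨c, hc, hcq⟩ := Finset.mem_image.1 h
        obtain ⟨h1, h2, h3, h4⟩ := four_edges hc
        have s1 : OLCDAux.rel _ (c.1 - 1) (c.2 - 1) := Or.inl h4
        have s2 : OLCDAux.rel _ (c.2 - 1) c.1 := Or.inr h1
        have : Relation.ReflTransGen
            (OLCDAux.rel (OLCDAux.PP true C ∪ OLCDAux.PP false C)) (c.1 - 1) c.1 :=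
          Relation.ReflTransGen.tail (Relation.ReflTransGen.single s1) s2
        have hk2 : (k:ℤ) + 1 = c.1 := by omega
        have hk1 : (k:ℤ) = c.1 - 1 := by omega
        rw [hk2, hk1]
        exact this
      · obtain ⟨c, hc, hcq⟩ := Finset.mem_image.1 h
        obtain ⟨h1, h2, h3, h4⟩ := four_edges hc
        have s1 : OLCDAux.rel _ (c.2 - 1) (c.1 - 1) := Or.inr h4
        have s2 : OLCDAux.rel _ (c.1 - 1) c.2 := Or.inl h2
        have : Relation.ReflTransGen
            (OLCDAux.rel (OLCDAux.PP true C ∪ OLCDAux.PP false C)) (c.2 - 1) c.2 :=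
          Relation.ReflTransGen.tail (Relation.ReflTransGen.single s1) s2
        have hk2 : (k:ℤ) + 1 = c.2 := by omega
        have hk1 : (k:ℤ) = c.2 - 1 := by omega
        rw [hk2, hk1]
        exact this
    push_cast
    exact hIH.trans hstep

lemma cntU_eq_one {d : ℕ} {C : Finset (ℤ × ℤ)} (hC : IsOLCD d C) :
    OLCDAux.cnt (Set.Icc (0:ℤ) (2 * (d:ℤ)))
      (OLCDAux.PP true C ∪ OLCDAux.PP false C) = 1 := by
  set U := OLCDAux.PP true C ∪ OLCDAux.PP false C with hU
  have himg : (OLCDAux.comp U) '' Set.Icc (0:ℤ) (2 * (d:ℤ)) = {OLCDAux.comp U 0} := by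
    apply Set.eq_singleton_iff_nonempty_unique_mem.2
    constructor
    · exact ⟨OLCDAux.comp U 0, ⟨0, Set.mem_Icc.2 ⟨le_refl 0, by positivity⟩, rfl⟩⟩
    · rintro _ ⟨x, hx, rfl⟩
      rw [Set.mem_Icc] at hx
      have hx0 : (x.toNat : ℤ) = x := Int.toNat_of_nonneg hx.1
      have hconn := conn hC x.toNat (by omega)
      rw [hx0] at hconn
      exact OLCDAux.comp_eq_of_mem (hconn : x ∈ OLCDAux.comp U 0)
  rw [OLCDAux.cnt, himg, Set.ncard_singleton]

/-- `Γ_{s_A} + Γ_{s_B} ≤ d + 2`, where `s_A` (resp. `s_B`) sends every chord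
to `A` (resp. `B`). -/
theorem gamma_sA_add_gamma_sB_le (d : ℕ) (C : Finset (ℤ × ℤ)) (hC : IsOLCD d C) :
    Gamma d C (fun _ => true) + Gamma d C (fun _ => false) ≤ d + 2 := by
  have hgood := good_of_isOLCD hC
  have hcast : (((2 * d : ℕ) : ℤ)) = 2 * (d : ℤ) := by push_cast; ring
  have hmain := OLCDAux.main_ind (2 * d) d C hC.1 hgood
  rw [hcast] at hmain
  rw [Gamma_eq_cnt d C true, Gamma_eq_cnt d C false]
  rw [cntU_eq_one hC] at hmain
  omega
end

section
/- For every oriented linear chord diagram C of d chords with ⟨C⟩ ≠ 0, the maximal exponent of ⟨C⟩ is at most d + 2(Γ_{s_A} − 1) and the minimal exponent of ⟨C⟩ is at least −d − 2(Γ_{s_B} − 1); consequently span ⟨C⟩ ≤ 2d + 2(Γ_{s_A} + Γ_{s_B} − 2). -/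
open Equiv LaurentPolynomial Finset

open MulAction Pointwise

lemma X1 (i j : ℤ) :
    swap (i-1) (j-1) ∈
      Subgroup.closure ({swap i (j-1), swap (i-1) j, swap i j} : Set (Perm ℤ)) := by
  by_cases hij : i = j
  · subst hij
    have h0 : swap (i-1) (i-1) = (1 : Perm ℤ) := Equiv.swap_self _
    rw [h0]
    exact Subgroup.one_mem _
  · set σ : Perm ℤ := swap (i-1) j * swap i (j-1) with hσ
    have h1 : σ i = j - 1 := by
      simp only [hσ, Perm.mul_apply, swap_apply_left]
      exact swap_apply_of_ne_of_ne (by omega) (by omega)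
    have h2 : σ j = i - 1 := by
      have e1 : (swap i (j-1)) j = j := swap_apply_of_ne_of_ne (by omega) (by omega)
      simp only [hσ, Perm.mul_apply, e1, swap_apply_right]
    have key : swap (i-1) (j-1) = σ * swap i j * σ⁻¹ := by
      rw [← Equiv.swap_apply_apply, h1, h2, Equiv.swap_comm]
    rw [key]
    have m1 : swap i (j-1) ∈ Subgroup.closure ({swap i (j-1), swap (i-1) j, swap i j} : Set (Perm ℤ)) :=
      Subgroup.subset_closure (by simp)
    have m2 : swap (i-1) j ∈ Subgroup.closure ({swap i (j-1), swap (i-1) j, swap i j} : Set (Perm ℤ)) :=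
      Subgroup.subset_closure (by simp)
    have m3 : swap i j ∈ Subgroup.closure ({swap i (j-1), swap (i-1) j, swap i j} : Set (Perm ℤ)) :=
      Subgroup.subset_closure (by simp)
    have mσ : σ ∈ _ := Subgroup.mul_mem _ m2 m1
    exact Subgroup.mul_mem _ (Subgroup.mul_mem _ mσ m3) (Subgroup.inv_mem _ mσ)

lemma X2 (i j : ℤ) :
    swap (i-1) j ∈
      Subgroup.closure ({swap i j, swap (i-1) (j-1), swap i (j-1)} : Set (Perm ℤ)) := by
  by_cases hij : i = j
  · subst hij
    have : swap (i-1) i = swap i (i-1) := swap_comm _ _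
    rw [this]
    exact Subgroup.subset_closure (by simp)
  · by_cases hij1 : i = j + 1
    · have : i - 1 = j := by omega
      have h0 : swap j j = (1 : Perm ℤ) := Equiv.swap_self _
      rw [this, h0]
      exact Subgroup.one_mem _
    · set σ : Perm ℤ := swap (i-1) (j-1) * swap i (j-1) with hσ
      have h1 : σ i = i - 1 := by
        simp only [hσ, Perm.mul_apply, swap_apply_left, swap_apply_right]
      have h2 : σ j = j := by
        have e1 : (swap i (j-1)) j = j := swap_apply_of_ne_of_ne (by omega) (by omega)
        have e2 : (swap (i-1) (j-1)) j = j := swap_apply_of_ne_of_ne (by omega) (by omega)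
        simp only [hσ, Perm.mul_apply, e1, e2]
      have key : swap (i-1) j = σ * swap i j * σ⁻¹ := by
        rw [← Equiv.swap_apply_apply, h1, h2]
      rw [key]
      have m1 : swap i (j-1) ∈ Subgroup.closure ({swap i j, swap (i-1) (j-1), swap i (j-1)} : Set (Perm ℤ)) :=
        Subgroup.subset_closure (by simp)
      have m2 : swap (i-1) (j-1) ∈ Subgroup.closure ({swap i j, swap (i-1) (j-1), swap i (j-1)} : Set (Perm ℤ)) :=
        Subgroup.subset_closure (by simp)
      have m3 : swap i j ∈ Subgroup.closure ({swap i j, swap (i-1) (j-1), swap i (j-1)} : Set (Perm ℤ)) :=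
        Subgroup.subset_closure (by simp)
      have mσ : σ ∈ _ := Subgroup.mul_mem _ m2 m1
      exact Subgroup.mul_mem _ (Subgroup.mul_mem _ mσ m3) (Subgroup.inv_mem _ mσ)

noncomputable def orbCount (G : Subgroup (Perm ℤ)) (I : Set ℤ) : ℕ :=
  ((fun x : ℤ => MulAction.orbit G x) '' I).ncard

lemma orbit_mono {G H : Subgroup (Perm ℤ)} (h : G ≤ H) (x : ℤ) :
    orbit G x ⊆ orbit H x := by
  rintro y ⟨⟨g, hg⟩, rfl⟩
  exact ⟨⟨g, h hg⟩, rfl⟩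

lemma hmap_orbit {G H : Subgroup (Perm ℤ)} (h : G ≤ H) (x : ℤ) :
    (⋃ y ∈ orbit G x, orbit H y) = orbit H x := by
  apply subset_antisymm
  · refine Set.iUnion₂_subset fun y hy => ?_
    have : y ∈ orbit H x := orbit_mono h x hy
    rw [orbit_eq_iff.2 this]
  · exact Set.subset_biUnion_of_mem (mem_orbit_self x)

lemma orbCount_anti {G H : Subgroup (Perm ℤ)} (h : G ≤ H) {I : Set ℤ} (hI : I.Finite) :
    orbCount H I ≤ orbCount G I := by
  have himg : (fun x : ℤ => orbit H x) '' I =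
      (fun O : Set ℤ => ⋃ y ∈ O, orbit H y) '' ((fun x : ℤ => orbit G x) '' I) := by
    rw [← Set.image_comp]
    exact Set.image_congr fun x _ => (hmap_orbit h x).symm
  rw [orbCount, himg]
  exact Set.ncard_image_le (hI.image _)

lemma smul_orbit_self {G : Subgroup (Perm ℤ)} {g : Perm ℤ} (hg : g ∈ G) (x : ℤ) :
    g • (orbit G x) = orbit G x := by
  ext z
  constructor
  · rintro ⟨y, ⟨⟨k, hk⟩, rfl⟩, rfl⟩
    exact ⟨⟨g, hg⟩ * ⟨k, hk⟩, rfl⟩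
  · rintro ⟨⟨k, hk⟩, rfl⟩
    refine ⟨(⟨g, hg⟩⁻¹ * ⟨k, hk⟩ : G) • x, ⟨_, rfl⟩, ?_⟩
    show g • ((⟨g, hg⟩⁻¹ * ⟨k, hk⟩ : G) • x) = _
    rw [Subgroup.smul_def]
    simp [mul_smul]

/-- orbits of elements outside the orbits of `a` and `b` don't change when adding `swap a b`. -/
lemma orbit_insert_eq (S : Set (Perm ℤ)) (a b : ℤ) {x : ℤ}
    (ha : x ∉ orbit (Subgroup.closure S) a) (hb : x ∉ orbit (Subgroup.closure S) b) :
    orbit (Subgroup.closure (insert (Equiv.swap a b) S)) x = orbit (Subgroup.closure S) x := by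
  set G := Subgroup.closure S
  set H := Subgroup.closure (insert (Equiv.swap a b) S)
  have hGH : G ≤ H := Subgroup.closure_mono (Set.subset_insert _ _)
  apply subset_antisymm
  · -- H ≤ stabilizer of orbit G x
    have hstab : H ≤ MulAction.stabilizer (Perm ℤ) (orbit G x) := by
      rw [Subgroup.closure_le]
      rintro g (rfl | hgS)
      · rw [SetLike.mem_coe, mem_stabilizer_iff]
        have hfix : ∀ y ∈ orbit G x, Equiv.swap a b • y = y := by
          intro y hy
          have hya : y ≠ a := by
            rintro rfl
            have hax : orbit G y = orbit G x := orbit_eq_iff.2 hy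
            rw [hax] at ha
            exact ha (mem_orbit_self x)
          have hyb : y ≠ b := by
            rintro rfl
            have hbx : orbit G y = orbit G x := orbit_eq_iff.2 hy
            rw [hbx] at hb
            exact hb (mem_orbit_self x)
          show Equiv.swap a b y = y
          exact Equiv.swap_apply_of_ne_of_ne hya hyb
        ext z
        constructor
        · rintro ⟨y, hy, rfl⟩
          show Equiv.swap a b • y ∈ orbit G x
          rw [hfix y hy]; exact hy
        · intro hz
          exact ⟨z, hz, hfix z hz⟩
      · rw [SetLike.mem_coe, mem_stabilizer_iff]
        exact smul_orbit_self (Subgroup.subset_closure hgS) x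
    rintro z ⟨⟨h', hh'⟩, rfl⟩
    have := mem_stabilizer_iff.1 (hstab hh')
    rw [← this]
    exact ⟨x, mem_orbit_self x, rfl⟩
  · exact orbit_mono hGH x

lemma notmem_orbit_of_ne {G : Subgroup (Perm ℤ)} {z a : ℤ}
    (h : orbit G z ≠ orbit G a) : z ∉ orbit G a :=
  fun hz => h (orbit_eq_iff.2 hz)

lemma mem_orbit_symm' {G : Subgroup (Perm ℤ)} {z w : ℤ} (h : z ∈ orbit G w) :
    w ∈ orbit G z := by
  rw [orbit_eq_iff.2 h]
  exact mem_orbit_self w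

lemma orbCount_le_insert_swap (S : Set (Perm ℤ)) (a b : ℤ) {I : Set ℤ} (hI : I.Finite) :
    orbCount (Subgroup.closure S) I ≤
      orbCount (Subgroup.closure (insert (Equiv.swap a b) S)) I + 1 := by
  set G := Subgroup.closure S with hG
  set H := Subgroup.closure (insert (Equiv.swap a b) S) with hH
  have hGH : G ≤ H := Subgroup.closure_mono (Set.subset_insert _ _)
  set hm : Set ℤ → Set ℤ := fun O => ⋃ y ∈ O, orbit H y with hhm
  have key : ∀ x : ℤ, hm (orbit G x) = orbit H x := fun x => hmap_orbit hGH x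
  set FG := (fun x : ℤ => orbit G x) '' I with hFG
  set FH := (fun x : ℤ => orbit H x) '' I with hFH
  have hFGfin : FG.Finite := hI.image _
  have hFHfin : FH.Finite := hI.image _
  have hinj : Set.InjOn hm (FG \ {orbit G a}) := by
    rintro O1 ⟨⟨x, hxI, rfl⟩, hxa⟩ O2 ⟨⟨y, hyI, rfl⟩, hya⟩ heq
    simp only [Set.mem_singleton_iff] at hxa hya
    rw [key, key] at heq
    have hxa' : x ∉ orbit G a := notmem_orbit_of_ne hxa
    have hya' : y ∉ orbit G a := notmem_orbit_of_ne hya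
    by_cases hxb : x ∈ orbit G b
    · by_cases hyb : y ∈ orbit G b
      · show orbit G x = orbit G y
        rw [orbit_eq_iff.2 hxb, orbit_eq_iff.2 hyb]
      · exfalso
        have h1 : orbit H y = orbit G y := orbit_insert_eq S a b hya' hyb
        have h2 : b ∈ orbit H x := by
          have : orbit H x = orbit H b := orbit_eq_iff.2 (orbit_mono hGH b hxb)
          rw [this]; exact mem_orbit_self b
        rw [heq, h1] at h2
        exact hyb (mem_orbit_symm' h2)
    · by_cases hyb : y ∈ orbit G b
      · exfalso
        have h1 : orbit H x = orbit G x := orbit_insert_eq S a b hxa' hxb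
        have h2 : b ∈ orbit H y := by
          have : orbit H y = orbit H b := orbit_eq_iff.2 (orbit_mono hGH b hyb)
          rw [this]; exact mem_orbit_self b
        rw [← heq, h1] at h2
        exact hxb (mem_orbit_symm' h2)
      · show orbit G x = orbit G y
        rw [← orbit_insert_eq S a b hxa' hxb, ← orbit_insert_eq S a b hya' hyb]
        exact heq
  have himg : hm '' (FG \ {orbit G a}) ⊆ FH := by
    rintro _ ⟨O, ⟨⟨x, hxI, rfl⟩, _⟩, rfl⟩
    exact ⟨x, hxI, (key x).symm⟩
  calc FG.ncard ≤ (insert (orbit G a) (FG \ {orbit G a})).ncard := by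
        apply Set.ncard_le_ncard _ ((hFGfin.diff).insert _)
        intro O hO
        by_cases h : O = orbit G a
        · exact h ▸ Set.mem_insert _ _
        · exact Set.mem_insert_of_mem _ ⟨hO, h⟩
    _ ≤ (FG \ {orbit G a}).ncard + 1 := Set.ncard_insert_le _ _
    _ = (hm '' (FG \ {orbit G a})).ncard + 1 := by rw [Set.ncard_image_of_injOn hinj]
    _ ≤ FH.ncard + 1 := by
        exact Nat.add_le_add_right (Set.ncard_le_ncard himg hFHfin) 1

lemma gamma_eq_orbCount (d : ℕ) (C : Finset (ℤ × ℤ)) (s : {c // c ∈ C} → Bool) :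
    Gamma d C s = orbCount (stateGroup C s) (Set.Icc (0 : ℤ) (2 * d)) := rfl

lemma flip_core_X1 {E E' : Set (Perm ℤ)} (i j : ℤ) {I : Set ℤ} (hI : I.Finite)
    (hA : ({swap i (j-1), swap (i-1) j} : Set (Perm ℤ)) ⊆ E)
    (hB' : E' ⊆ E ∪ {swap i j, swap (i-1) (j-1)}) :
    orbCount (Subgroup.closure E) I ≤ orbCount (Subgroup.closure E') I + 1 := by
  have step1 := orbCount_le_insert_swap E i j hI
  have h3 : ({swap i (j-1), swap (i-1) j, swap i j} : Set (Perm ℤ)) ⊆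
      insert (swap i j) E := by
    rintro x (rfl | rfl | rfl)
    · exact Set.mem_insert_of_mem _ (hA (by simp))
    · exact Set.mem_insert_of_mem _ (hA (by simp))
    · exact Set.mem_insert _ _
  have step2 : Subgroup.closure E' ≤ Subgroup.closure (insert (swap i j) E) := by
    rw [Subgroup.closure_le]
    intro x hx
    rcases hB' hx with hxE | hx2
    · exact Subgroup.subset_closure (Set.mem_insert_of_mem _ hxE)
    · rcases hx2 with rfl | rfl
      · exact Subgroup.subset_closure (Set.mem_insert _ _)
      · exact Subgroup.closure_mono h3 (X1 i j)
  have step3 := orbCount_anti step2 hI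
  omega

lemma flip_core_X2 {E E' : Set (Perm ℤ)} (i j : ℤ) {I : Set ℤ} (hI : I.Finite)
    (hB : ({swap i j, swap (i-1) (j-1)} : Set (Perm ℤ)) ⊆ E)
    (hA' : E' ⊆ E ∪ {swap i (j-1), swap (i-1) j}) :
    orbCount (Subgroup.closure E) I ≤ orbCount (Subgroup.closure E') I + 1 := by
  have step1 := orbCount_le_insert_swap E i (j-1) hI
  have h3 : ({swap i j, swap (i-1) (j-1), swap i (j-1)} : Set (Perm ℤ)) ⊆
      insert (swap i (j-1)) E := by
    rintro x (rfl | rfl | rfl)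
    · exact Set.mem_insert_of_mem _ (hB (by simp))
    · exact Set.mem_insert_of_mem _ (hB (by simp))
    · exact Set.mem_insert _ _
  have step2 : Subgroup.closure E' ≤ Subgroup.closure (insert (swap i (j-1)) E) := by
    rw [Subgroup.closure_le]
    intro x hx
    rcases hA' hx with hxE | hx2
    · exact Subgroup.subset_closure (Set.mem_insert_of_mem _ hxE)
    · rcases hx2 with rfl | rfl
      · exact Subgroup.subset_closure (Set.mem_insert _ _)
      · exact Subgroup.closure_mono h3 (X2 i j)
  have step3 := orbCount_anti step2 hI
  omega

lemma gamma_flip (d : ℕ) (C : Finset (ℤ × ℤ)) (s s' : {c // c ∈ C} → Bool)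
    (c₀ : {c // c ∈ C}) (hagree : ∀ c, c ≠ c₀ → s c = s' c) :
    Gamma d C s ≤ Gamma d C s' + 1 := by
  by_cases heq : s c₀ = s' c₀
  · have : s = s' := funext fun c => by
      by_cases hc : c = c₀
      · rw [hc]; exact heq
      · exact hagree c hc
    rw [this]; omega
  · set E : Set (Perm ℤ) := ⋃ c : {c // c ∈ C}, Rset (s c) c.1 with hE
    set E' : Set (Perm ℤ) := ⋃ c : {c // c ∈ C}, Rset (s' c) c.1 with hE'
    have hIfin : (Set.Icc (0 : ℤ) (2 * d)).Finite := Set.finite_Icc _ _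
    have hsub : ∀ c : {c // c ∈ C}, Rset (s c) c.1 ⊆ E := fun c =>
      Set.subset_iUnion (fun c : {c // c ∈ C} => Rset (s c) c.1) c
    have hd : (s c₀ = decide ((c₀ : ℤ × ℤ).1 < (c₀ : ℤ × ℤ).2) ∧
          s' c₀ ≠ decide ((c₀ : ℤ × ℤ).1 < (c₀ : ℤ × ℤ).2)) ∨
        (s c₀ ≠ decide ((c₀ : ℤ × ℤ).1 < (c₀ : ℤ × ℤ).2) ∧
          s' c₀ = decide ((c₀ : ℤ × ℤ).1 < (c₀ : ℤ × ℤ).2)) := by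
      cases hb : decide ((c₀ : ℤ × ℤ).1 < (c₀ : ℤ × ℤ).2) <;>
        cases h : s c₀ <;> cases h' : s' c₀ <;> simp_all
    have hEsub' : ∀ c : {c // c ∈ C}, c ≠ c₀ → Rset (s' c) c.1 ⊆ E := by
      intro c hc
      rw [← hagree c hc]
      exact hsub c
    rw [gamma_eq_orbCount, gamma_eq_orbCount]
    show orbCount (Subgroup.closure E) _ ≤ orbCount (Subgroup.closure E') _ + 1
    rcases hd with ⟨h1, h2⟩ | ⟨h1, h2⟩
    · -- s-label is the A-form
      have RS : Rset (s c₀) (c₀ : ℤ × ℤ) =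
          ({swap (c₀ : ℤ × ℤ).1 ((c₀ : ℤ × ℤ).2 - 1),
            swap ((c₀ : ℤ × ℤ).1 - 1) (c₀ : ℤ × ℤ).2} : Set (Perm ℤ)) := by
        rw [Rset, if_pos h1]
      have RS' : Rset (s' c₀) (c₀ : ℤ × ℤ) =
          ({swap (c₀ : ℤ × ℤ).1 (c₀ : ℤ × ℤ).2,
            swap ((c₀ : ℤ × ℤ).1 - 1) ((c₀ : ℤ × ℤ).2 - 1)} : Set (Perm ℤ)) := by
        rw [Rset, if_neg h2]
      refine flip_core_X1 (c₀ : ℤ × ℤ).1 (c₀ : ℤ × ℤ).2 hIfin ?_ ?_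
      · rw [← RS]; exact hsub c₀
      · intro x hx
        rcases Set.mem_iUnion.1 hx with ⟨c, hc⟩
        by_cases hcc : c = c₀
        · subst hcc
          rw [RS'] at hc
          exact Or.inr hc
        · exact Or.inl (hEsub' c hcc hc)
    · -- s-label is the B-form
      have RS : Rset (s c₀) (c₀ : ℤ × ℤ) =
          ({swap (c₀ : ℤ × ℤ).1 (c₀ : ℤ × ℤ).2,
            swap ((c₀ : ℤ × ℤ).1 - 1) ((c₀ : ℤ × ℤ).2 - 1)} : Set (Perm ℤ)) := by
        rw [Rset, if_neg h1]
      have RS' : Rset (s' c₀) (c₀ : ℤ × ℤ) =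
          ({swap (c₀ : ℤ × ℤ).1 ((c₀ : ℤ × ℤ).2 - 1),
            swap ((c₀ : ℤ × ℤ).1 - 1) (c₀ : ℤ × ℤ).2} : Set (Perm ℤ)) := by
        rw [Rset, if_pos h2]
      refine flip_core_X2 (c₀ : ℤ × ℤ).1 (c₀ : ℤ × ℤ).2 hIfin ?_ ?_
      · rw [← RS]; exact hsub c₀
      · intro x hx
        rcases Set.mem_iUnion.1 hx with ⟨c, hc⟩
        by_cases hcc : c = c₀
        · subst hcc
          rw [RS'] at hc
          exact Or.inr hc
        · exact Or.inl (hEsub' c hcc hc)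

lemma gamma_le_target (d : ℕ) (C : Finset (ℤ × ℤ)) (t : {c // c ∈ C} → Bool) :
    ∀ (n : ℕ) (s : {c // c ∈ C} → Bool),
      (Finset.univ.filter fun c => s c ≠ t c).card = n →
      Gamma d C s ≤ Gamma d C t + n := by
  intro n
  induction n with
  | zero =>
    intro s hs
    have hfe : (Finset.univ.filter fun c => s c ≠ t c) = ∅ := Finset.card_eq_zero.1 hs
    have : s = t := by
      funext c
      by_contra hc
      have : c ∈ (Finset.univ.filter fun c => s c ≠ t c) := by
        simp [hc]
      rw [hfe] at this
      exact absurd this (Finset.notMem_empty c)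
    rw [this]
    omega
  | succ n ih =>
    intro s hs
    have hne : (Finset.univ.filter fun c => s c ≠ t c).Nonempty := by
      rw [← Finset.card_pos, hs]; omega
    obtain ⟨c₀, hc₀⟩ := hne
    have hc₀' : s c₀ ≠ t c₀ := (Finset.mem_filter.1 hc₀).2
    set s' := Function.update s c₀ (t c₀) with hs'
    have hagree : ∀ c, c ≠ c₀ → s c = s' c := by
      intro c hc
      rw [hs', Function.update_of_ne hc]
    have hcard : (Finset.univ.filter fun c => s' c ≠ t c).card = n := by
      have hset : (Finset.univ.filter fun c => s' c ≠ t c) =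
          (Finset.univ.filter fun c => s c ≠ t c).erase c₀ := by
        ext c
        simp only [Finset.mem_filter, Finset.mem_erase, Finset.mem_univ, true_and]
        by_cases hc : c = c₀
        · subst hc
          simp [hs', Function.update_self]
        · rw [hs', Function.update_of_ne hc]
          tauto
      rw [hset, Finset.card_erase_of_mem hc₀, hs]
      omega
    have h1 : Gamma d C s ≤ Gamma d C s' + 1 := gamma_flip d C s s' c₀ hagree
    have h2 : Gamma d C s' ≤ Gamma d C t + n := ih s' hcard
    omega


def Bnd (l u : ℤ) (f : LaurentPolynomial ℤ) : Prop := ∀ n ∈ f.coeff.support, l ≤ n ∧ n ≤ u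

lemma bnd_T (n : ℤ) : Bnd n n (T n : LaurentPolynomial ℤ) := by
  intro m hm
  have : m ∈ ({n} : Finset ℤ) := Finsupp.support_single_subset hm
  simp at this
  omega

lemma bnd_mul {l u l' u' : ℤ} {f g : LaurentPolynomial ℤ}
    (hf : Bnd l u f) (hg : Bnd l' u' g) : Bnd (l + l') (u + u') (f * g) := by
  intro m hm
  have := AddMonoidAlgebra.support_coeff_mul_subset f g hm
  rcases Finset.mem_add.1 this with ⟨p, hp, q, hq, rfl⟩
  obtain ⟨h1, h2⟩ := hf p hp
  obtain ⟨h3, h4⟩ := hg q hq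
  constructor <;> omega

lemma bnd_sub {l u l' u' : ℤ} {f g : LaurentPolynomial ℤ}
    (hf : Bnd l u f) (hg : Bnd l' u' g) :
    Bnd (min l l') (max u u') (f - g) := by
  intro m hm
  rcases Finset.mem_union.1 (Finsupp.support_sub hm) with h | h
  · obtain ⟨h1, h2⟩ := hf m h
    constructor <;> omega
  · obtain ⟨h1, h2⟩ := hg m h
    constructor <;> omega

lemma bnd_neg {l u : ℤ} {f : LaurentPolynomial ℤ} (hf : Bnd l u f) : Bnd l u (-f) := by
  intro m hm
  rw [AddMonoidAlgebra.coeff_neg, Finsupp.support_neg] at hm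
  exact hf m hm

lemma bnd_loop : Bnd (-2) 2 (-T 2 - T (-2) : LaurentPolynomial ℤ) := by
  have := bnd_sub (bnd_neg (bnd_T 2)) (bnd_T (-2))
  intro m hm
  obtain ⟨h1, h2⟩ := this m hm
  constructor <;> omega

lemma bnd_one : Bnd 0 0 (1 : LaurentPolynomial ℤ) := by
  have : (1 : LaurentPolynomial ℤ) = T 0 := by
    rw [LaurentPolynomial.T_zero]
  rw [this]
  exact bnd_T 0

lemma bnd_loop_pow (k : ℕ) :
    Bnd (-(2 * k)) (2 * k) ((-T 2 - T (-2) : LaurentPolynomial ℤ) ^ k) := by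
  induction k with
  | zero => simpa using bnd_one
  | succ k ih =>
    rw [pow_succ]
    have := bnd_mul ih bnd_loop
    intro m hm
    obtain ⟨h1, h2⟩ := this m hm
    push_cast at h1 h2 ⊢
    constructor <;> omega

lemma bnd_bracketTerm (d : ℕ) (C : Finset (ℤ × ℤ)) (s : {c // c ∈ C} → Bool) :
    Bnd ((((Finset.univ.filter fun c => s c = true).card : ℤ) -
          ((Finset.univ.filter fun c => s c = false).card : ℤ)) - 2 * (Gamma d C s - 1 : ℕ))
        ((((Finset.univ.filter fun c => s c = true).card : ℤ) -
          ((Finset.univ.filter fun c => s c = false).card : ℤ)) + 2 * (Gamma d C s - 1 : ℕ))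
        (bracketTerm d C s) := by
  have := bnd_mul (bnd_T ((((Finset.univ.filter fun c => s c = true).card : ℤ) -
      ((Finset.univ.filter fun c => s c = false).card : ℤ)))) (bnd_loop_pow (Gamma d C s - 1))
  intro m hm
  obtain ⟨h1, h2⟩ := this m hm
  constructor <;> omega

lemma gamma_pos (d : ℕ) (C : Finset (ℤ × ℤ)) (s : {c // c ∈ C} → Bool) :
    1 ≤ Gamma d C s := by
  rw [Nat.one_le_iff_ne_zero, ← Nat.pos_iff_ne_zero]
  apply (Set.ncard_pos ((Set.finite_Icc _ _).image _)).2
  exact ⟨_, ⟨0, by constructor <;> [exact le_refl 0; positivity], rfl⟩⟩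

lemma maxDeg_le {f : LaurentPolynomial ℤ} (hf : f ≠ 0) {D : ℤ}
    (h : ∀ n ∈ f.coeff.support, n ≤ D) : maxDeg f ≤ D := by
  have hne : f.coeff.support.Nonempty := Finsupp.support_nonempty_iff.2 (fun h0 => hf (AddMonoidAlgebra.coeff_injective (by rw [h0]; rfl)))
  obtain ⟨m, hm⟩ := Finset.max_of_nonempty hne
  rw [maxDeg, hm]
  exact h m (Finset.mem_of_max hm)

lemma le_minDeg {f : LaurentPolynomial ℤ} (hf : f ≠ 0) {L : ℤ}
    (h : ∀ n ∈ f.coeff.support, L ≤ n) : L ≤ minDeg f := by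
  have hne : f.coeff.support.Nonempty := Finsupp.support_nonempty_iff.2 (fun h0 => hf (AddMonoidAlgebra.coeff_injective (by rw [h0]; rfl)))
  obtain ⟨m, hm⟩ := Finset.min_of_nonempty hne
  rw [minDeg, hm]
  exact h m (Finset.mem_of_min hm)


/-- for `⟨C⟩ ≠ 0`, the maximal exponent of `⟨C⟩` is at most `d + 2(Γ_{s_A} - 1)`,
the minimal exponent is at least `-d - 2(Γ_{s_B} - 1)`, and consequently
`span ⟨C⟩ ≤ 2d + 2(Γ_{s_A} + Γ_{s_B} - 2)`. -/
theorem bracket_deg_bounds (d : ℕ) (C : Finset (ℤ × ℤ)) (hC : IsOLCD d C)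
    (h : bracket d C ≠ 0) :
    maxDeg (bracket d C) ≤ (d : ℤ) + 2 * ((Gamma d C (fun _ => true) : ℤ) - 1) ∧
    -(d : ℤ) - 2 * ((Gamma d C (fun _ => false) : ℤ) - 1) ≤ minDeg (bracket d C) ∧
    spanL (bracket d C) ≤ 2 * (d : ℤ) +
      2 * ((Gamma d C (fun _ => true) : ℤ) + (Gamma d C (fun _ => false) : ℤ) - 2) := by
  have hcard : ∀ s : {c // c ∈ C} → Bool,
      (Finset.univ.filter fun c => s c = true).card +
        (Finset.univ.filter fun c => s c = false).card = d := by
    intro s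
    have h1 := Finset.card_filter_add_card_filter_not
      (s := (Finset.univ : Finset {c // c ∈ C})) (p := fun c => s c = true)
    have h2 : (Finset.univ.filter fun c => ¬ (s c = true)) =
        (Finset.univ.filter fun c => s c = false) := by
      apply Finset.filter_congr
      intro c _
      simp
    rw [h2] at h1
    rw [h1, Finset.card_univ, Fintype.card_coe, hC.1]
  -- Gamma comparisons
  have hGA : ∀ s : {c // c ∈ C} → Bool,
      Gamma d C s ≤ Gamma d C (fun _ => true) +
        (Finset.univ.filter fun c => s c = false).card := by
    intro s
    apply gamma_le_target d C (fun _ => true) _ s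
    congr 1
    apply Finset.filter_congr
    intro c _
    simp
  have hGB : ∀ s : {c // c ∈ C} → Bool,
      Gamma d C s ≤ Gamma d C (fun _ => false) +
        (Finset.univ.filter fun c => s c = true).card := by
    intro s
    apply gamma_le_target d C (fun _ => false) _ s
    congr 1
    apply Finset.filter_congr
    intro c _
    simp
  -- support bound for the whole bracket
  have hsupp : ∀ n ∈ (bracket d C).coeff.support,
      -(d : ℤ) - 2 * ((Gamma d C (fun _ => false) : ℤ) - 1) ≤ n ∧
        n ≤ (d : ℤ) + 2 * ((Gamma d C (fun _ => true) : ℤ) - 1) := by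
    intro n hn
    rw [bracket, AddMonoidAlgebra.coeff_sum] at hn
    have := Finsupp.support_finset_sum hn
    rcases Finset.mem_biUnion.1 this with ⟨s, _, hns⟩
    obtain ⟨h1, h2⟩ := bnd_bracketTerm d C s n hns
    have hc := hcard s
    have hA := hGA s
    have hB := hGB s
    have hpos := gamma_pos d C s
    have hposA := gamma_pos d C (fun _ => true)
    have hposB := gamma_pos d C (fun _ => false)
    have hcast : ((Gamma d C s - 1 : ℕ) : ℤ) = (Gamma d C s : ℤ) - 1 := by omega
    rw [hcast] at h1 h2
    constructor <;> [skip; skip] <;>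
      (zify at hc hA hB; omega)
  refine ⟨?_, ?_, ?_⟩
  · exact maxDeg_le h fun n hn => (hsupp n hn).2
  · exact le_minDeg h fun n hn => (hsupp n hn).1
  · have h1 := maxDeg_le h fun n hn => (hsupp n hn).2
    have h2 := le_minDeg h fun n hn => (hsupp n hn).1
    rw [spanL]
    omega
end

section
/- Let C be an oriented linear chord diagram of d chords and let 0 ≤ ℓ ≤ 2d. Then ⟨C_−^ℓ⟩ = (−A⁻³)·⟨C⟩, where C_−^ℓ is the diagram of d+1 chords obtained from C by replacing every entry i of a chord by i if i ≤ ℓ and by i+2 if i > ℓ, and adjoining the negative chord (ℓ+2, ℓ+1). -/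
open Equiv LaurentPolynomial Finset

lemma Rset_of_eq {lbl : Bool} {c : ℤ × ℤ} (h : lbl = decide (c.1 < c.2)) :
    Rset lbl c = {Equiv.swap c.1 (c.2 - 1), Equiv.swap (c.1 - 1) c.2} := if_pos h

lemma Rset_of_ne {lbl : Bool} {c : ℤ × ℤ} (h : lbl ≠ decide (c.1 < c.2)) :
    Rset lbl c = {Equiv.swap c.1 c.2, Equiv.swap (c.1 - 1) (c.2 - 1)} := if_neg h

-- === generic lemmas (from t1/t2) ===
lemma myInvClosure {β : Type*} (S : Set (Perm ℤ)) (f : ℤ → β)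
    (h : ∀ g ∈ S, ∀ x, f (g x) = f x) :
    ∀ g ∈ Subgroup.closure S, ∀ x, f (g x) = f x := by
  intro g hg
  induction hg using Subgroup.closure_induction with
  | mem g hgS => exact h g hgS
  | one => simp
  | mul a b _ _ ha hb => intro x; simp only [Perm.mul_apply]; rw [ha, hb]
  | inv a _ ha => intro x; have := ha (a⁻¹ x); simpa using this.symm

lemma orbit_smul_eq (S : Set (Perm ℤ)) (g : Perm ℤ) (hg : g ∈ S) (x : ℤ) :
    MulAction.orbit (Subgroup.closure S) (g x) = MulAction.orbit (Subgroup.closure S) x := by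
  apply MulAction.orbit_eq_iff.2
  exact ⟨⟨g, Subgroup.subset_closure hg⟩, rfl⟩

lemma orbit_swap_eq (S : Set (Perm ℤ)) (a b : ℤ) (hg : Equiv.swap a b ∈ S) :
    MulAction.orbit (Subgroup.closure S) a = MulAction.orbit (Subgroup.closure S) b := by
  have := orbit_smul_eq S _ hg b
  rwa [Equiv.swap_apply_right] at this

lemma f_eq_of_orbit_eq {β : Type*} (S : Set (Perm ℤ)) (f : ℤ → β)
    (h : ∀ g ∈ S, ∀ x, f (g x) = f x) {x y : ℤ}
    (hxy : MulAction.orbit (Subgroup.closure S) x = MulAction.orbit (Subgroup.closure S) y) :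
    f x = f y := by
  have hx : x ∈ MulAction.orbit (Subgroup.closure S) y := hxy ▸ MulAction.mem_orbit_self x
  obtain ⟨⟨g, hgmem⟩, rfl⟩ := hx
  exact myInvClosure S f h g hgmem y

lemma ncard_image_congr {α β γ : Type*} {I : Set α} (hI : I.Finite) {g1 : α → β} {g2 : α → γ}
    (h : ∀ x y, g1 x = g1 y ↔ g2 x = g2 y) : (g1 '' I).ncard = (g2 '' I).ncard := by
  refine Set.Finite.induction_on (motive := fun I _ => (g1 '' I).ncard = (g2 '' I).ncard) I hI (by simp) ?_
  intro a I' haI hI' IH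
  rw [Set.image_insert_eq, Set.image_insert_eq]
  by_cases hmem : g1 a ∈ g1 '' I'
  · have hmem2 : g2 a ∈ g2 '' I' := by
      obtain ⟨x, hx, hgx⟩ := hmem
      exact ⟨x, hx, (h x a).1 hgx⟩
    rw [Set.insert_eq_self.2 hmem, Set.insert_eq_self.2 hmem2, IH]
  · have hmem2 : g2 a ∉ g2 '' I' := by
      intro ⟨x, hx, hgx⟩
      exact hmem ⟨x, hx, (h x a).2 hgx⟩
    rw [Set.ncard_insert_of_notMem hmem (hI'.image _),
      Set.ncard_insert_of_notMem hmem2 (hI'.image _), IH]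

lemma swap_invariant {β : Type*} (f : ℤ → β) {u v : ℤ} (h : f u = f v) (x : ℤ) :
    f (Equiv.swap u v x) = f x := by
  rcases eq_or_ne x u with rfl | hu
  · rw [Equiv.swap_apply_left]; exact h.symm
  rcases eq_or_ne x v with rfl | hv
  · rw [Equiv.swap_apply_right]; exact h
  · rw [Equiv.swap_apply_of_ne_of_ne hu hv]

namespace MNeg

def phi (ℓ : ℤ) (x : ℤ) : ℤ := if x ≤ ℓ then x else x + 2
def rho (ℓ : ℤ) (x : ℤ) : ℤ := if x ≤ ℓ then x else if x = ℓ + 1 then ℓ else x - 2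
def Fm (ℓ : ℤ) (p : ℤ × ℤ) : ℤ × ℤ := (phi ℓ p.1, phi ℓ p.2)

variable (ℓ : ℤ)

lemma phi_inj : Function.Injective (phi ℓ) := by
  intro x y h; unfold phi at h; split_ifs at h <;> omega

lemma Fm_inj : Function.Injective (Fm ℓ) := by
  intro p q h
  exact Prod.ext (phi_inj ℓ (congrArg Prod.fst h)) (phi_inj ℓ (congrArg Prod.snd h))

lemma rho_phi (x : ℤ) : rho ℓ (phi ℓ x) = x := by
  unfold phi rho; split_ifs <;> omega

lemma rho_phi_sub_one (x : ℤ) : rho ℓ (phi ℓ x - 1) = x - 1 := by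
  unfold phi rho; split_ifs <;> omega

lemma phi_ne_succ (x : ℤ) : phi ℓ x ≠ ℓ + 1 := by unfold phi; split_ifs <;> omega
lemma phi_sub_one_ne_succ (x : ℤ) : phi ℓ x - 1 ≠ ℓ + 1 := by unfold phi; split_ifs <;> omega

lemma phi_lt_iff (x y : ℤ) : (phi ℓ x < phi ℓ y) = (x < y) := by
  unfold phi; split_ifs <;> first | rfl | (rw [eq_iff_iff]; constructor <;> omega)

-- === the two generator sets ===
variable (C : Finset (ℤ × ℤ)) (s : {c // c ∈ C} → Bool) (b : Bool)

def S0 : Set (Perm ℤ) := ⋃ c : {c // c ∈ C}, Rset (s c) c.1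
def Sp : Set (Perm ℤ) :=
  Rset b (ℓ + 2, ℓ + 1) ∪ ⋃ c : {c // c ∈ C}, Rset (s c) (Fm ℓ c.1)

abbrev orb (S : Set (Perm ℤ)) (x : ℤ) : Set ℤ :=
  MulAction.orbit (Subgroup.closure S) x

lemma orb_swap {S : Set (Perm ℤ)} {a b : ℤ} (hg : Equiv.swap a b ∈ S) : orb S a = orb S b :=
  orbit_swap_eq S a b hg

variable {ℓ C s b}

-- membership helpers
lemma mem_Sp_monogon {g : Perm ℤ} (hg : g ∈ Rset b (ℓ + 2, ℓ + 1)) : g ∈ Sp ℓ C s b :=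
  Set.mem_union_left _ hg

lemma mem_Sp_chord (c : {c // c ∈ C}) {g : Perm ℤ} (hg : g ∈ Rset (s c) (Fm ℓ c.1)) :
    g ∈ Sp ℓ C s b :=
  Set.mem_union_right _ (Set.mem_iUnion.2 ⟨c, hg⟩)

lemma mem_S0_chord (c : {c // c ∈ C}) {g : Perm ℤ} (hg : g ∈ Rset (s c) c.1) :
    g ∈ S0 C s :=
  Set.mem_iUnion.2 ⟨c, hg⟩

-- (ii) : ℓ and ℓ+2 are in the same Sp-orbit
lemma hd_mono : decide (((ℓ:ℤ) + 2, (ℓ:ℤ) + 1).1 < ((ℓ:ℤ) + 2, (ℓ:ℤ) + 1).2) = false :=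
  decide_eq_false (by simp)

lemma mem_Rset_false : Equiv.swap (ℓ + 2) ℓ ∈ Rset false ((ℓ:ℤ) + 2, ℓ + 1) := by
  rw [Rset_of_eq (hd_mono).symm]
  have : Equiv.swap ((ℓ:ℤ) + 2) ℓ
      = Equiv.swap (((ℓ:ℤ) + 2, (ℓ:ℤ) + 1).1) (((ℓ:ℤ) + 2, (ℓ:ℤ) + 1).2 - 1) := by
    congr 1 <;> ring
  rw [this]; exact Set.mem_insert _ _

lemma mem_Rset_true1 : Equiv.swap (ℓ + 2) (ℓ + 1) ∈ Rset true ((ℓ:ℤ) + 2, ℓ + 1) := by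
  rw [Rset_of_ne (by rw [hd_mono]; simp)]
  exact Set.mem_insert _ _

lemma mem_Rset_true2 : Equiv.swap (ℓ + 1) ℓ ∈ Rset true ((ℓ:ℤ) + 2, ℓ + 1) := by
  rw [Rset_of_ne (by rw [hd_mono]; simp)]
  have : Equiv.swap ((ℓ:ℤ) + 1) ℓ
      = Equiv.swap (((ℓ:ℤ) + 2, (ℓ:ℤ) + 1).1 - 1) (((ℓ:ℤ) + 2, (ℓ:ℤ) + 1).2 - 1) := by
    congr 1 <;> ring
  rw [this]; exact Set.mem_insert_of_mem _ rfl

lemma orb_l_l2 : orb (Sp ℓ C s b) ℓ = orb (Sp ℓ C s b) (ℓ + 2) := by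
  cases b with
  | false => exact (orb_swap (mem_Sp_monogon (mem_Rset_false))).symm
  | true =>
    calc orb (Sp ℓ C s true) ℓ = orb (Sp ℓ C s true) (ℓ + 1) :=
          (orb_swap (mem_Sp_monogon (mem_Rset_true2))).symm
      _ = orb (Sp ℓ C s true) (ℓ + 2) := (orb_swap (mem_Sp_monogon (mem_Rset_true1))).symm

lemma orb_l1_of_true : orb (Sp ℓ C s true) (ℓ + 1) = orb (Sp ℓ C s true) ℓ :=
  orb_swap (mem_Sp_monogon (mem_Rset_true2))

lemma orb_phi_sub_one (x : ℤ) :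
    orb (Sp ℓ C s b) (phi ℓ x - 1) = orb (Sp ℓ C s b) (phi ℓ (x - 1)) := by
  rcases le_or_gt x ℓ with h | h
  · have : phi ℓ x - 1 = phi ℓ (x - 1) := by unfold phi; split_ifs <;> omega
    rw [this]
  rcases eq_or_lt_of_le (by omega : ℓ + 1 ≤ x) with h1 | h1
  · have e1 : phi ℓ x - 1 = ℓ + 2 := by unfold phi; split_ifs <;> omega
    have e2 : phi ℓ (x - 1) = ℓ := by unfold phi; split_ifs <;> omega
    rw [e1, e2, ← orb_l_l2]
  · have : phi ℓ x - 1 = phi ℓ (x - 1) := by unfold phi; split_ifs <;> omega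
    rw [this]


lemma hdec_shift (c : ℤ × ℤ) :
    decide ((Fm ℓ c).1 < (Fm ℓ c).2) = decide (c.1 < c.2) :=
  decide_eq_decide.2 (iff_of_eq (phi_lt_iff ℓ c.1 c.2))

lemma fwd_invariant : ∀ g ∈ S0 C s, ∀ x : ℤ,
    orb (Sp ℓ C s b) (phi ℓ (g x)) = orb (Sp ℓ C s b) (phi ℓ x) := by
  intro g hg
  obtain ⟨c, hgc⟩ := Set.mem_iUnion.1 hg
  by_cases hbr : s c = decide (c.1.1 < c.1.2)
  · have hbr' : s c = decide ((Fm ℓ c.1).1 < (Fm ℓ c.1).2) := by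
      rw [hdec_shift]; exact hbr
    have m1 : Equiv.swap (phi ℓ c.1.1) (phi ℓ c.1.2 - 1) ∈ Rset (s c) (Fm ℓ c.1) := by
      rw [Rset_of_eq hbr']; exact Set.mem_insert _ _
    have m2 : Equiv.swap (phi ℓ c.1.1 - 1) (phi ℓ c.1.2) ∈ Rset (s c) (Fm ℓ c.1) := by
      rw [Rset_of_eq hbr']; exact Set.mem_insert_of_mem _ rfl
    rw [Rset_of_eq hbr] at hgc
    rcases hgc with rfl | hgc
    · refine swap_invariant (fun z => orb (Sp ℓ C s b) (phi ℓ z)) ?_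
      calc orb (Sp ℓ C s b) (phi ℓ c.1.1)
          = orb (Sp ℓ C s b) (phi ℓ c.1.2 - 1) := orb_swap (mem_Sp_chord c m1)
        _ = orb (Sp ℓ C s b) (phi ℓ (c.1.2 - 1)) := orb_phi_sub_one _
    · rw [Set.mem_singleton_iff] at hgc
      subst hgc
      refine swap_invariant (fun z => orb (Sp ℓ C s b) (phi ℓ z)) ?_
      calc orb (Sp ℓ C s b) (phi ℓ (c.1.1 - 1))
          = orb (Sp ℓ C s b) (phi ℓ c.1.1 - 1) := (orb_phi_sub_one _).symm
        _ = orb (Sp ℓ C s b) (phi ℓ c.1.2) := orb_swap (mem_Sp_chord c m2)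
  · have hbr' : s c ≠ decide ((Fm ℓ c.1).1 < (Fm ℓ c.1).2) := by
      rw [hdec_shift]; exact hbr
    have m1 : Equiv.swap (phi ℓ c.1.1) (phi ℓ c.1.2) ∈ Rset (s c) (Fm ℓ c.1) := by
      rw [Rset_of_ne hbr']; exact Set.mem_insert _ _
    have m2 : Equiv.swap (phi ℓ c.1.1 - 1) (phi ℓ c.1.2 - 1) ∈ Rset (s c) (Fm ℓ c.1) := by
      rw [Rset_of_ne hbr']; exact Set.mem_insert_of_mem _ rfl
    rw [Rset_of_ne hbr] at hgc
    rcases hgc with rfl | hgc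
    · exact swap_invariant (fun z => orb (Sp ℓ C s b) (phi ℓ z))
        (orb_swap (mem_Sp_chord c m1))
    · rw [Set.mem_singleton_iff] at hgc
      subst hgc
      refine swap_invariant (fun z => orb (Sp ℓ C s b) (phi ℓ z)) ?_
      calc orb (Sp ℓ C s b) (phi ℓ (c.1.1 - 1))
          = orb (Sp ℓ C s b) (phi ℓ c.1.1 - 1) := (orb_phi_sub_one _).symm
        _ = orb (Sp ℓ C s b) (phi ℓ c.1.2 - 1) := orb_swap (mem_Sp_chord c m2)
        _ = orb (Sp ℓ C s b) (phi ℓ (c.1.2 - 1)) := orb_phi_sub_one _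

variable (ℓ C s b) in
noncomputable def fback : ℤ → Option (Set ℤ) := fun z =>
  if b = false ∧ z = ℓ + 1 then none else some (orb (S0 C s) (rho ℓ z))

lemma rho_l : rho ℓ ℓ = ℓ := by unfold rho; split_ifs <;> omega
lemma rho_l1 : rho ℓ (ℓ + 1) = ℓ := by unfold rho; split_ifs <;> omega
lemma rho_l2 : rho ℓ (ℓ + 2) = ℓ := by unfold rho; split_ifs <;> omega

lemma fback_of_ne {z : ℤ} (hz : z ≠ ℓ + 1) :
    fback ℓ C s b z = some (orb (S0 C s) (rho ℓ z)) := by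
  unfold fback; rw [if_neg (by tauto)]

lemma fback_l1_false : fback ℓ C s false (ℓ + 1) = none := by
  unfold fback; rw [if_pos ⟨rfl, rfl⟩]

lemma fback_invariant : ∀ g ∈ Sp ℓ C s b, ∀ x : ℤ,
    fback ℓ C s b (g x) = fback ℓ C s b x := by
  intro g hg
  rcases hg with hg | hg
  · -- monogon generators
    cases b with
    | true =>
      have fval' : ∀ z : ℤ, z = ℓ ∨ z = ℓ + 1 ∨ z = ℓ + 2 →
          fback ℓ C s true z = some (orb (S0 C s) ℓ) := by
        intro z hz
        have ft : fback ℓ C s true z = some (orb (S0 C s) (rho ℓ z)) := by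
          unfold fback; rw [if_neg (by simp)]
        rw [ft]
        rcases hz with rfl | rfl | rfl
        · rw [rho_l]
        · rw [rho_l1]
        · rw [rho_l2]
      rw [Rset_of_ne (by rw [hd_mono]; simp)] at hg
      rcases hg with rfl | hg
      · refine swap_invariant _ ?_
        rw [fval' _ (by simp <;> omega), fval' _ (by simp <;> omega)]
      · rw [Set.mem_singleton_iff] at hg
        subst hg
        refine swap_invariant _ ?_
        rw [fval' _ (by simp <;> omega), fval' _ (by simp <;> omega)]
    | false =>
      rw [Rset_of_eq (hd_mono).symm] at hg
      rcases hg with rfl | hg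
      · refine swap_invariant _ ?_
        rw [fback_of_ne (by simp <;> omega), fback_of_ne (by simp <;> omega)]
        have e2 : (((ℓ:ℤ)+2, (ℓ:ℤ)+1).2 : ℤ) - 1 = ℓ := by simp
        rw [show (((ℓ:ℤ)+2, (ℓ:ℤ)+1).1 : ℤ) = ℓ + 2 from rfl, e2, rho_l2, rho_l]
      · rw [Set.mem_singleton_iff] at hg
        subst hg
        refine swap_invariant _ ?_
        rw [show (((ℓ:ℤ)+2, (ℓ:ℤ)+1).1 : ℤ) - 1 = ℓ + 1 by simp [add_sub_assoc],
          show (((ℓ:ℤ)+2, (ℓ:ℤ)+1).2 : ℤ) = ℓ + 1 from rfl]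
  · -- chord generators
    obtain ⟨c, hgc⟩ := Set.mem_iUnion.1 hg
    have key : ∀ u v : ℤ, Equiv.swap (rho ℓ u) (rho ℓ v) ∈ S0 C s → u ≠ ℓ + 1 → v ≠ ℓ + 1 →
        ∀ x : ℤ, fback ℓ C s b (Equiv.swap u v x) = fback ℓ C s b x := by
      intro u v hmem hu hv
      refine swap_invariant _ ?_
      rw [fback_of_ne hu, fback_of_ne hv, orb_swap hmem]
    by_cases hbr : s c = decide (c.1.1 < c.1.2)
    · have hbr' : s c = decide ((Fm ℓ c.1).1 < (Fm ℓ c.1).2) := by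
        rw [hdec_shift]; exact hbr
      rw [Rset_of_eq hbr'] at hgc
      rcases hgc with rfl | hgc
      · refine key _ _ ?_ (phi_ne_succ ℓ _) (phi_sub_one_ne_succ ℓ _)
        rw [show ((Fm ℓ c.1).1 : ℤ) = phi ℓ c.1.1 from rfl,
          show ((Fm ℓ c.1).2 : ℤ) = phi ℓ c.1.2 from rfl, rho_phi, rho_phi_sub_one]
        exact mem_S0_chord c (by rw [Rset_of_eq hbr]; exact Set.mem_insert _ _)
      · rw [Set.mem_singleton_iff] at hgc
        subst hgc
        refine key _ _ ?_ (phi_sub_one_ne_succ ℓ _) (phi_ne_succ ℓ _)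
        rw [show ((Fm ℓ c.1).1 : ℤ) = phi ℓ c.1.1 from rfl,
          show ((Fm ℓ c.1).2 : ℤ) = phi ℓ c.1.2 from rfl, rho_phi, rho_phi_sub_one]
        exact mem_S0_chord c (by rw [Rset_of_eq hbr]; exact Set.mem_insert_of_mem _ rfl)
    · have hbr' : s c ≠ decide ((Fm ℓ c.1).1 < (Fm ℓ c.1).2) := by
        rw [hdec_shift]; exact hbr
      rw [Rset_of_ne hbr'] at hgc
      rcases hgc with rfl | hgc
      · refine key _ _ ?_ (phi_ne_succ ℓ _) (phi_ne_succ ℓ _)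
        rw [show ((Fm ℓ c.1).1 : ℤ) = phi ℓ c.1.1 from rfl,
          show ((Fm ℓ c.1).2 : ℤ) = phi ℓ c.1.2 from rfl, rho_phi, rho_phi]
        exact mem_S0_chord c (by rw [Rset_of_ne hbr]; exact Set.mem_insert _ _)
      · rw [Set.mem_singleton_iff] at hgc
        subst hgc
        refine key _ _ ?_ (phi_sub_one_ne_succ ℓ _) (phi_sub_one_ne_succ ℓ _)
        rw [show ((Fm ℓ c.1).1 : ℤ) = phi ℓ c.1.1 from rfl,
          show ((Fm ℓ c.1).2 : ℤ) = phi ℓ c.1.2 from rfl, rho_phi_sub_one, rho_phi_sub_one]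
        exact mem_S0_chord c (by rw [Rset_of_ne hbr]; exact Set.mem_insert_of_mem _ rfl)

lemma orbit_corr (x y : ℤ) :
    orb (S0 C s) x = orb (S0 C s) y ↔
      orb (Sp ℓ C s b) (phi ℓ x) = orb (Sp ℓ C s b) (phi ℓ y) := by
  constructor
  · intro h
    exact f_eq_of_orbit_eq _ (fun z => orb (Sp ℓ C s b) (phi ℓ z)) fwd_invariant h
  · intro h
    have h2 := f_eq_of_orbit_eq _ (fback ℓ C s b) fback_invariant h
    rw [fback_of_ne (phi_ne_succ ℓ x), fback_of_ne (phi_ne_succ ℓ y), rho_phi, rho_phi] at h2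
    exact Option.some_injective _ h2

lemma orb_l1_ne (x : ℤ) :
    orb (Sp ℓ C s false) (ℓ + 1) ≠ orb (Sp ℓ C s false) (phi ℓ x) := by
  intro h
  have h2 := f_eq_of_orbit_eq _ (fback ℓ C s false) fback_invariant h
  rw [fback_l1_false, fback_of_ne (phi_ne_succ ℓ x)] at h2
  exact Option.some_ne_none _ h2.symm


-- ==== Gamma layer ====
section GammaLayer
variable {d : ℕ}

lemma image_orb_Cp (hℓ0 : 0 ≤ ℓ) (hℓ : ℓ ≤ 2 * (d:ℤ)) :
    (fun x : ℤ => orb (Sp ℓ C s b) x) '' Set.Icc (0:ℤ) (2 * d + 2) =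
      ((fun x : ℤ => orb (Sp ℓ C s b) (phi ℓ x)) '' Set.Icc (0:ℤ) (2 * d)) ∪
        (if b then ∅ else {orb (Sp ℓ C s false) (ℓ + 1)}) := by
  ext O
  constructor
  · rintro ⟨w, hw, rfl⟩
    rw [Set.mem_Icc] at hw
    by_cases h1 : w ≤ ℓ
    · refine Set.mem_union_left _ ⟨w, Set.mem_Icc.2 ⟨hw.1, by omega⟩, ?_⟩
      have : phi ℓ w = w := if_pos h1
      beta_reduce
      rw [this]
    by_cases h2 : w = ℓ + 1
    · subst h2
      cases b with
      | true =>
        refine Set.mem_union_left _ ⟨ℓ, Set.mem_Icc.2 ⟨hℓ0, hℓ⟩, ?_⟩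
        have : phi ℓ ℓ = ℓ := if_pos le_rfl
        beta_reduce
        rw [this, orb_l1_of_true]
      | false =>
        exact Set.mem_union_right _ (by simp)
    by_cases h3 : w = ℓ + 2
    · subst h3
      refine Set.mem_union_left _ ⟨ℓ, Set.mem_Icc.2 ⟨hℓ0, hℓ⟩, ?_⟩
      have : phi ℓ ℓ = ℓ := if_pos le_rfl
      beta_reduce
      rw [this, ← orb_l_l2]
    · refine Set.mem_union_left _ ⟨w - 2, Set.mem_Icc.2 ⟨by omega, by omega⟩, ?_⟩
      have : phi ℓ (w - 2) = w := by unfold phi; split_ifs <;> omega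
      beta_reduce
      rw [this]
  · rintro (⟨x, hx, rfl⟩ | hO)
    · rw [Set.mem_Icc] at hx
      refine ⟨phi ℓ x, Set.mem_Icc.2 ⟨?_, ?_⟩, rfl⟩ <;>
        (unfold phi; split_ifs <;> omega)
    · cases b with
      | true => simp at hO
      | false =>
        simp only [if_neg Bool.false_ne_true, Set.mem_singleton_iff] at hO
        subst hO
        exact ⟨ℓ + 1, Set.mem_Icc.2 ⟨by omega, by omega⟩, rfl⟩

lemma ncard_fwd :
    ((fun x : ℤ => orb (Sp ℓ C s b) (phi ℓ x)) '' Set.Icc (0:ℤ) (2 * d)).ncard =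
      ((fun x : ℤ => orb (S0 C s) x) '' Set.Icc (0:ℤ) (2 * d)).ncard :=
  (ncard_image_congr (Set.finite_Icc _ _) (fun x y => orbit_corr (b := b) x y)).symm

end GammaLayer


-- ==== C-prime layer ====
section CpLayer
variable (ℓ C) in
def Cp : Finset (ℤ × ℤ) := insert (ℓ + 2, ℓ + 1) (C.image (Fm ℓ))

lemma mem_Cp_m : ((ℓ + 2 : ℤ), (ℓ + 1 : ℤ)) ∈ Cp ℓ C := Finset.mem_insert_self _ _

lemma mem_Cp_Fm {p : ℤ × ℤ} (hp : p ∈ C) : Fm ℓ p ∈ Cp ℓ C :=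
  Finset.mem_insert_of_mem (Finset.mem_image_of_mem _ hp)

lemma genset_Cp (s' : {c // c ∈ Cp ℓ C} → Bool)
    (hb : s' ⟨(ℓ + 2, ℓ + 1), mem_Cp_m⟩ = b)
    (hs : ∀ p (hp : p ∈ C), s' ⟨Fm ℓ p, mem_Cp_Fm hp⟩ = s ⟨p, hp⟩) :
    (⋃ c : {c // c ∈ Cp ℓ C}, Rset (s' c) c.1) = Sp ℓ C s b := by
  ext g
  simp only [Set.mem_iUnion]
  constructor
  · rintro ⟨⟨c, hc⟩, hgc⟩
    rcases Finset.mem_insert.1 hc with rfl | hc2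
    · have e : (⟨(ℓ + 2, ℓ + 1), hc⟩ : {c // c ∈ Cp ℓ C}) = ⟨(ℓ + 2, ℓ + 1), mem_Cp_m⟩ :=
        Subtype.ext rfl
      rw [e, hb] at hgc
      exact Set.mem_union_left _ hgc
    · obtain ⟨p, hp, rfl⟩ := Finset.mem_image.1 hc2
      have e : (⟨Fm ℓ p, hc⟩ : {c // c ∈ Cp ℓ C}) = ⟨Fm ℓ p, mem_Cp_Fm hp⟩ := Subtype.ext rfl
      rw [e, hs p hp] at hgc
      exact Set.mem_union_right _ (Set.mem_iUnion.2 ⟨⟨p, hp⟩, hgc⟩)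
  · rintro (hg | hg)
    · exact ⟨⟨(ℓ + 2, ℓ + 1), mem_Cp_m⟩, by rwa [hb]⟩
    · obtain ⟨⟨p, hp⟩, hgp⟩ := Set.mem_iUnion.1 hg
      exact ⟨⟨Fm ℓ p, mem_Cp_Fm hp⟩, by rwa [hs p hp]⟩

lemma stateGroup_Cp (s' : {c // c ∈ Cp ℓ C} → Bool)
    (hb : s' ⟨(ℓ + 2, ℓ + 1), mem_Cp_m⟩ = b)
    (hs : ∀ p (hp : p ∈ C), s' ⟨Fm ℓ p, mem_Cp_Fm hp⟩ = s ⟨p, hp⟩) :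
    stateGroup (Cp ℓ C) s' = Subgroup.closure (Sp ℓ C s b) := by
  rw [stateGroup, genset_Cp s' hb hs]

lemma Gamma_Cp {d : ℕ} (hℓ0 : 0 ≤ ℓ) (hℓ : ℓ ≤ 2 * (d:ℤ)) (s' : {c // c ∈ Cp ℓ C} → Bool)
    (hb : s' ⟨(ℓ + 2, ℓ + 1), mem_Cp_m⟩ = b)
    (hs : ∀ p (hp : p ∈ C), s' ⟨Fm ℓ p, mem_Cp_Fm hp⟩ = s ⟨p, hp⟩) :
    Gamma (d + 1) (Cp ℓ C) s' = Gamma d C s + (if b then 0 else 1) := by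
  have hstep : Gamma (d + 1) (Cp ℓ C) s' =
      ((fun x : ℤ => orb (Sp ℓ C s b) x) '' Set.Icc (0:ℤ) (2 * ((d + 1 : ℕ) : ℤ))).ncard := by
    unfold Gamma
    exact congrArg
      (fun H : Subgroup (Perm ℤ) =>
        ((fun x : ℤ => MulAction.orbit H x) '' Set.Icc (0:ℤ) (2 * ((d + 1 : ℕ) : ℤ))).ncard)
      (stateGroup_Cp s' hb hs)
  rw [hstep]
  have hIcc : (2 * ((d + 1 : ℕ) : ℤ)) = 2 * (d:ℤ) + 2 := by push_cast; ring
  rw [hIcc]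
  have himg := image_orb_Cp (C := C) (s := s) (b := b) (d := d) hℓ0 hℓ
  rw [himg]
  cases b with
  | true =>
    rw [if_pos rfl, Set.union_empty, ncard_fwd]
    rfl
  | false =>
    rw [if_neg (by simp), Set.union_singleton,
      Set.ncard_insert_of_notMem ?_ ((Set.finite_Icc _ _).image _), ncard_fwd]
    · rfl
    · rintro ⟨x, hx, hxe⟩
      exact orb_l1_ne x hxe.symm

lemma Gamma_pos {d : ℕ} (hd : 0 ≤ 2 * (d:ℤ)) : 1 ≤ Gamma d C s := by
  have : (Set.Icc (0:ℤ) (2*d)).Nonempty := ⟨0, Set.mem_Icc.2 ⟨le_refl _, hd⟩⟩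
  have h2 : ((fun x : ℤ => MulAction.orbit (stateGroup C s) x) '' Set.Icc (0:ℤ) (2*d)).Nonempty :=
    this.image _
  have h3 : ((fun x : ℤ => MulAction.orbit (stateGroup C s) x) '' Set.Icc (0:ℤ) (2*d)).Finite :=
    (Set.finite_Icc _ _).image _
  exact (Set.ncard_pos h3).2 h2

end CpLayer

end MNeg

lemma card_filter_equiv {α β : Type*} [Fintype α] [Fintype β] (e : α ≃ β) (P : β → Prop)
    [DecidablePred P] :
    (Finset.univ.filter fun a => P (e a)).card = (Finset.univ.filter P).card := by
  refine Finset.card_bij (fun a _ => e a) ?_ ?_ ?_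
  · intro a ha
    simp only [Finset.mem_filter, Finset.mem_univ, true_and] at ha ⊢
    exact ha
  · intro a _ a' _ h
    exact e.injective h
  · intro b hb
    refine ⟨e.symm b, ?_, by simp⟩
    simp only [Finset.mem_filter, Finset.mem_univ, true_and, Equiv.apply_symm_apply] at hb ⊢
    exact hb

open LaurentPolynomial in
lemma T_key_identity (n : ℤ) (Γ : ℕ) (hΓ : 1 ≤ Γ) :
    T (n + 1) * (-T 2 - T (-2) : LaurentPolynomial ℤ) ^ (Γ - 1) +
      T (n - 1) * (-T 2 - T (-2)) ^ (Γ + 1 - 1) =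
      -T (-3) * (T n * (-T 2 - T (-2)) ^ (Γ - 1)) := by
  have h : Γ + 1 - 1 = (Γ - 1) + 1 := by omega
  rw [h, pow_succ]
  have e1 : (T (n + 1) : LaurentPolynomial ℤ) = T n * T 1 := T_add n 1
  have e2 : (T (n - 1) : LaurentPolynomial ℤ) = T n * T (-1) := by
    rw [sub_eq_add_neg]; exact T_add n (-1)
  have h1 : (T (-1) * T 2 : LaurentPolynomial ℤ) = T 1 := by rw [← T_add]; norm_num
  have h2 : (T (-1) * T (-2) : LaurentPolynomial ℤ) = T (-3) := by rw [← T_add]; norm_num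
  have key : (T 1 : LaurentPolynomial ℤ) + T (-1) * (-T 2 - T (-2)) = -T (-3) := by
    calc (T 1 : LaurentPolynomial ℤ) + T (-1) * (-T 2 - T (-2))
        = T 1 - T (-1) * T 2 - T (-1) * T (-2) := by ring
      _ = -T (-3) := by rw [h1, h2]; ring
  calc T (n + 1) * (-T 2 - T (-2) : LaurentPolynomial ℤ) ^ (Γ - 1) +
        T (n - 1) * ((-T 2 - T (-2)) ^ (Γ - 1) * (-T 2 - T (-2)))
      = (T 1 + T (-1) * (-T 2 - T (-2))) * (T n * (-T 2 - T (-2)) ^ (Γ - 1)) := by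
        rw [e1, e2]; ring
    _ = -T (-3) * (T n * (-T 2 - T (-2)) ^ (Γ - 1)) := by rw [key]

open LaurentPolynomial in
/-- birth of a negative monogon: `⟨C₋^ℓ⟩ = (-A⁻³)·⟨C⟩`, where `C₋^ℓ` is obtained
from `C` by replacing each entry `i` by `i` if `i ≤ ℓ` and by `i + 2` if `i > ℓ`, and
adjoining the negative chord `(ℓ+2, ℓ+1)`. -/
theorem bracket_monogon_neg (d : ℕ) (C : Finset (ℤ × ℤ)) (hC : IsOLCD d C)
    (ℓ : ℤ) (hℓ0 : 0 ≤ ℓ) (hℓ : ℓ ≤ 2 * d) :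
    bracket (d + 1)
      (insert (ℓ + 2, ℓ + 1)
        (C.image fun p => ((if p.1 ≤ ℓ then p.1 else p.1 + 2),
                           (if p.2 ≤ ℓ then p.2 else p.2 + 2)))) =
      (-T (-3)) * bracket d C := by
  classical
  show bracket (d + 1) (MNeg.Cp ℓ C) = -T (-3) * bracket d C
  have hfm_ne : ∀ p : ℤ × ℤ, MNeg.Fm ℓ p ≠ (ℓ + 2, ℓ + 1) := by
    intro p h
    exact MNeg.phi_ne_succ ℓ p.2 (congrArg Prod.snd h)
  set f : Option {c // c ∈ C} → {c // c ∈ MNeg.Cp ℓ C} :=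
    fun o => o.elim ⟨(ℓ + 2, ℓ + 1), MNeg.mem_Cp_m⟩
      (fun p => ⟨MNeg.Fm ℓ p.1, MNeg.mem_Cp_Fm p.2⟩) with hf
  have hbij : Function.Bijective f := by
    constructor
    · rintro (_ | ⟨p, hp⟩) (_ | ⟨q, hq⟩) h
      · rfl
      · exact absurd (congrArg Subtype.val h).symm (hfm_ne q)
      · exact absurd (congrArg Subtype.val h) (hfm_ne p)
      · have := MNeg.Fm_inj ℓ (congrArg Subtype.val h)
        rw [Option.some_inj]
        exact Subtype.ext this
    · rintro ⟨c, hc⟩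
      rcases Finset.mem_insert.1 hc with rfl | hc2
      · exact ⟨none, Subtype.ext rfl⟩
      · obtain ⟨p, hp, rfl⟩ := Finset.mem_image.1 hc2
        exact ⟨some ⟨p, hp⟩, Subtype.ext rfl⟩
  set e : Option {c // c ∈ C} ≃ {c // c ∈ MNeg.Cp ℓ C} := Equiv.ofBijective f hbij with he
  have he_none : e none = ⟨(ℓ + 2, ℓ + 1), MNeg.mem_Cp_m⟩ := rfl
  have he_some : ∀ p : {c // c ∈ C}, e (some p) = ⟨MNeg.Fm ℓ p.1, MNeg.mem_Cp_Fm p.2⟩ :=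
    fun _ => rfl
  set eqv : (Option {c // c ∈ C} → Bool) ≃ ({c // c ∈ MNeg.Cp ℓ C} → Bool) :=
    Equiv.arrowCongr e (Equiv.refl Bool) with heqv
  set pe : Bool × ({c // c ∈ C} → Bool) ≃ (Option {c // c ∈ C} → Bool) :=
    (Equiv.piOptionEquivProd (β := fun _ => Bool)).symm with hpe
  -- rewrite the sum
  rw [bracket, ← Equiv.sum_comp eqv (fun s' => bracketTerm (d + 1) (MNeg.Cp ℓ C) s'),
    ← Equiv.sum_comp pe (fun t => bracketTerm (d + 1) (MNeg.Cp ℓ C) (eqv t)),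
    Fintype.sum_prod_type]
  rw [bracket, Finset.mul_sum]
  rw [Finset.sum_comm]
  refine Finset.sum_congr rfl ?_
  intro s _
  -- per-state computation
  have hval : ∀ (b : Bool) (o : Option {c // c ∈ C}), eqv (pe (b, s)) (e o) = pe (b, s) o := by
    intro b o
    simp [heqv, Equiv.arrowCongr]
  have hpe_none : ∀ b : Bool, pe (b, s) none = b := fun _ => rfl
  have hpe_some : ∀ (b : Bool) (p : {c // c ∈ C}), pe (b, s) (some p) = s p := fun _ _ => rfl
  have hb : ∀ b : Bool, eqv (pe (b, s)) ⟨(ℓ + 2, ℓ + 1), MNeg.mem_Cp_m⟩ = b := by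
    intro b
    have := hval b none
    rw [he_none] at this
    rw [this, hpe_none]
  have hs : ∀ (b : Bool) (p : ℤ × ℤ) (hp : p ∈ C),
      eqv (pe (b, s)) ⟨MNeg.Fm ℓ p, MNeg.mem_Cp_Fm hp⟩ = s ⟨p, hp⟩ := by
    intro b p hp
    have := hval b (some ⟨p, hp⟩)
    rw [he_some] at this
    rw [this, hpe_some]
  -- Gamma values
  have hGam : ∀ b : Bool, Gamma (d + 1) (MNeg.Cp ℓ C) (eqv (pe (b, s))) =
      Gamma d C s + (if b then 0 else 1) :=
    fun b => MNeg.Gamma_Cp hℓ0 hℓ (eqv (pe (b, s))) (hb b) (hs b)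
  -- counting values
  have hcount : ∀ (b v : Bool),
      ((Finset.univ.filter fun c => eqv (pe (b, s)) c = v).card : ℤ) =
        ((Finset.univ.filter fun c => s c = v).card : ℤ) + (if b = v then 1 else 0) := by
    intro b v
    have h1 : (Finset.univ.filter fun c => eqv (pe (b, s)) c = v).card =
        (Finset.univ.filter fun o : Option {c // c ∈ C} => pe (b, s) o = v).card := by
      rw [← card_filter_equiv e (fun c => eqv (pe (b, s)) c = v)]
      congr 1
      ext o
      simp [Finset.mem_filter, hval b o]
    rw [h1, Finset.card_filter, univ_option, Finset.sum_insertNone]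
    simp only [hpe_none, hpe_some]
    rw [← Finset.card_filter]
    push_cast
    ring
  -- combine
  rw [Fintype.sum_bool]
  unfold bracketTerm
  rw [hGam true, hGam false, hcount true true, hcount true false,
    hcount false true, hcount false false]
  simp only [if_pos rfl, Bool.true_eq_false, Bool.false_eq_true, if_false, if_true]
  have hΓ : 1 ≤ Gamma d C s := MNeg.Gamma_pos (by positivity)
  have := T_key_identity
    (((Finset.univ.filter fun c => s c = true).card : ℤ) -
      ((Finset.univ.filter fun c => s c = false).card : ℤ)) (Gamma d C s) hΓ
  rw [show ((Finset.univ.filter fun c => s c = true).card : ℤ) + 1 -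
      (((Finset.univ.filter fun c => s c = false).card : ℤ) + 0) =
      (((Finset.univ.filter fun c => s c = true).card : ℤ) -
        ((Finset.univ.filter fun c => s c = false).card : ℤ)) + 1 by ring,
    show ((Finset.univ.filter fun c => s c = true).card : ℤ) + 0 -
      (((Finset.univ.filter fun c => s c = false).card : ℤ) + 1) =
      (((Finset.univ.filter fun c => s c = true).card : ℤ) -
        ((Finset.univ.filter fun c => s c = false).card : ℤ)) - 1 by ring,
    show Gamma d C s + 0 = Gamma d C s from rfl]
  exact this
end

section
/- Let C = {(i_1,j_1),…,(i_d,j_d)} be an oriented linear chord diagram of d chords and let C̄ := {(j_1,i_1),…,(j_d,i_d)} be the diagram obtained by reversing every chord. Then ⟨C̄⟩ is obtained from ⟨C⟩ by the substitution A ↦ A⁻¹, i.e. ⟨C̄⟩(A) = ⟨C⟩(A⁻¹). -/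
open Equiv LaurentPolynomial Finset

lemma Rset_not_swap (b : Bool) (c : ℤ × ℤ) (h : c.1 ≠ c.2) :
    Rset (!b) c.swap = Rset b c := by
  rcases lt_or_gt_of_ne h with hlt | hgt
  · have h1 : decide (c.1 < c.2) = true := by simpa using hlt
    have h2 : decide (c.swap.1 < c.swap.2) = false := by
      simp [Prod.swap, not_lt.mpr hlt.le]
    cases b <;>
      simp [Rset, h1, h2, Prod.swap, Set.pair_comm, Equiv.swap_comm] <;>
      exact fun hh => absurd hh (by omega)
  · have h1 : decide (c.1 < c.2) = false := by simp [not_lt.mpr hgt.le]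
    have h2 : decide (c.swap.1 < c.swap.2) = true := by simp [Prod.swap, hgt]
    cases b <;>
      simp [Rset, h1, h2, Prod.swap, Set.pair_comm, Equiv.swap_comm] <;>
      exact fun hh => absurd hh (by omega)

lemma IsOLCD.ne (d : ℕ) (C : Finset (ℤ × ℤ)) (hC : IsOLCD d C) :
    ∀ c ∈ C, c.1 ≠ c.2 := by
  intro c hc hEq
  have hcardU : (C.image Prod.fst ∪ C.image Prod.snd).card = 2 * d := by
    rw [hC.2, Int.card_Icc]; omega
  have h1 : (C.image Prod.fst).card ≤ d := le_trans (Finset.card_image_le) hC.1.le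
  have h2 : (C.image Prod.snd).card ≤ d := le_trans (Finset.card_image_le) hC.1.le
  have hinter : 1 ≤ (C.image Prod.fst ∩ C.image Prod.snd).card := by
    refine Finset.card_pos.mpr ⟨c.1, Finset.mem_inter.mpr ⟨?_, ?_⟩⟩
    · exact Finset.mem_image_of_mem _ hc
    · rw [hEq]; exact Finset.mem_image_of_mem _ hc
  have := Finset.card_union_add_card_inter (C.image Prod.fst) (C.image Prod.snd)
  omega

/-- reversing all the chords amounts to the substitution `A ↦ A⁻¹`:
the coefficient of `Aⁿ` in `⟨C̄⟩` equals the coefficient of `A⁻ⁿ` in `⟨C⟩`. -/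
theorem bracket_reverse (d : ℕ) (C : Finset (ℤ × ℤ)) (hC : IsOLCD d C) :
    ∀ n : ℤ, (bracket d (C.image Prod.swap)).coeff n = (bracket d C).coeff (-n) := by
  have hne := IsOLCD.ne d C hC
  have hmem : ∀ c : ℤ × ℤ, c ∈ C.image Prod.swap → c.swap ∈ C := by
    intro c hc
    rcases Finset.mem_image.mp hc with ⟨a, ha, rfl⟩
    simpa using ha
  let e : {c // c ∈ C.image Prod.swap} ≃ {c // c ∈ C} :=
    { toFun := fun c => ⟨c.1.swap, hmem _ c.2⟩
      invFun := fun c => ⟨c.1.swap, Finset.mem_image_of_mem _ c.2⟩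
      left_inv := fun c => by ext : 1; simp
      right_inv := fun c => by ext : 1; simp }
  let Φ : ({c // c ∈ C} → Bool) ≃ ({c // c ∈ C.image Prod.swap} → Bool) :=
    { toFun := fun t c => ! t (e c)
      invFun := fun s c => ! s (e.symm c)
      left_inv := fun t => by funext c; simp
      right_inv := fun s => by funext c; simp }
  have key : ∀ t : {c // c ∈ C} → Bool,
      bracketTerm d (C.image Prod.swap) (Φ t) = invert (bracketTerm d C t) := by
    intro t
    have hswap1 : ∀ c' : {c // c ∈ C.image Prod.swap}, (c' : ℤ × ℤ) = ((e c' : ℤ × ℤ)).swap := by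
      intro c'; simp [e]
    have hsg : stateGroup (C.image Prod.swap) (Φ t) = stateGroup C t := by
      unfold stateGroup
      congr 1
      have h1 : ∀ c' : {c // c ∈ C.image Prod.swap},
          Rset (Φ t c') (c' : ℤ × ℤ) = Rset (t (e c')) ((e c' : ℤ × ℤ)) := by
        intro c'
        rw [hswap1 c']
        exact Rset_not_swap (t (e c')) (e c' : ℤ × ℤ) (hne _ (e c').2)
      calc (⋃ c', Rset (Φ t c') (c' : ℤ × ℤ))
          = ⋃ c', Rset (t (e c')) ((e c' : ℤ × ℤ)) := Set.iUnion_congr h1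
        _ = ⋃ c, Rset (t c) (c : ℤ × ℤ) :=
            Equiv.iSup_comp (g := fun c : {c // c ∈ C} => Rset (t c) (c : ℤ × ℤ)) e
    have hGamma : Gamma d (C.image Prod.swap) (Φ t) = Gamma d C t := by
      unfold Gamma; rw [hsg]
    have hcard : ∀ b : Bool,
        (Finset.univ.filter fun c' => Φ t c' = b).card =
        (Finset.univ.filter fun c => t c = !b).card := by
      intro b
      apply Finset.card_bij (fun c' _ => e c')
      · intro c' hc'
        simp only [Finset.mem_filter, Finset.mem_univ, true_and] at hc' ⊢
        cases b <;> simp_all [Φ]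
      · intro a ha b' hb' hab
        exact e.injective hab
      · intro c hcf
        refine ⟨e.symm c, ?_, by simp⟩
        simp only [Finset.mem_filter, Finset.mem_univ, true_and] at hcf ⊢
        cases b <;> simp_all [Φ]
    rw [bracketTerm, bracketTerm, hGamma, hcard true, hcard false]
    rw [map_mul, map_pow, map_sub, map_neg, invert_T, invert_T, invert_T]
    congr 2
    · simp only [Bool.not_true, Bool.not_false]; ring
    · ring
  have hmain : bracket d (C.image Prod.swap) = invert (bracket d C) :=
   calc bracket d (C.image Prod.swap)
      = ∑ t : {c // c ∈ C} → Bool, bracketTerm d (C.image Prod.swap) (Φ t) :=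
        (Equiv.sum_comp Φ _).symm
    _ = invert (bracket d C) := by
        rw [bracket, map_sum]; exact Finset.sum_congr rfl fun t _ => key t
  intro n
  rw [hmain]
  exact invert_apply (bracket d C) n
end
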